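/- arXiv:1411.0074 — 10 statements merged into one kernel-verified Lean document; each statement's English description precedes it below -/
import Mathlib

section
/- Suppose α + β ≤ 1/(n−1). Then for every realization of the disjoint neighbor sets N_i^+(t), N_i^-(t) ⊆ V \ {i} and attention values B_t, D_t ∈ {0,1}, one step of the state-flipping update satisfies M(t+1) ≤ M(t); that is, the maximum absolute state is non-expansive. -/
/-- The maximum absolute state `M = max_{i ∈ V} |x i|`. -/
noncomputable def Mmax {n : ℕ} (hn : 3 ≤ n) (x : Fin n → ℝ) : ℝ :=
  Finset.univ.sup' ⟨⟨0, by omega⟩, Finset.mem_univ _⟩ fun i => |x i|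

/-- if `α + β ≤ 1/(n-1)`, then one step of the state-flipping update
is non-expansive for the maximum absolute state: `M(t+1) ≤ M(t)`. -/
theorem state_flipping_one_step_nonexpansive
    {n : ℕ} (hn : 3 ≤ n)
    (α β : ℝ) (hα : 0 < α) (hβ : 0 < β)
    (hαβ : α + β ≤ 1 / ((n : ℝ) - 1))
    (Np Nd : Fin n → Finset (Fin n))
    (hNp : ∀ i, i ∉ Np i) (hNd : ∀ i, i ∉ Nd i)
    (hdisj : ∀ i, Disjoint (Np i) (Nd i))
    (B D : ℝ) (hB : B = 0 ∨ B = 1) (hD : D = 0 ∨ D = 1)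
    (s s' : Fin n → ℝ)
    (hupd : ∀ i, s' i = s i - α * B * (∑ j ∈ Np i, (s i - s j))
        - β * D * (∑ j ∈ Nd i, (s i + s j))) :
    Mmax hn s' ≤ Mmax hn s := by
  set M := Mmax hn s with hMdef
  have hle : ∀ i, |s i| ≤ M := fun i =>
    Finset.le_sup' (fun i => |s i|) (Finset.mem_univ i)
  have hM0 : 0 ≤ M := le_trans (abs_nonneg _) (hle ⟨0, by omega⟩)
  have hn1 : (0:ℝ) < (n:ℝ) - 1 := by
    have : (3:ℝ) ≤ (n:ℝ) := by exact_mod_cast hn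
    linarith
  apply Finset.sup'_le
  intro i _
  have hB0 : 0 ≤ B := by rcases hB with h | h <;> simp [h]
  have hB1 : B ≤ 1 := by rcases hB with h | h <;> simp [h]
  have hD0 : 0 ≤ D := by rcases hD with h | h <;> simp [h]
  have hD1 : D ≤ 1 := by rcases hD with h | h <;> simp [h]
  set p := (Np i).card with hp
  set d := (Nd i).card with hd
  have hcardn : p + d ≤ n - 1 := by
    have h1 : (Np i ∪ Nd i).card = p + d := Finset.card_union_of_disjoint (hdisj i)
    have h2 : Np i ∪ Nd i ⊆ Finset.univ.erase i := by
      intro j hj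
      rcases Finset.mem_union.mp hj with h | h
      · exact Finset.mem_erase.mpr ⟨fun hji => hNp i (hji ▸ h), Finset.mem_univ _⟩
      · exact Finset.mem_erase.mpr ⟨fun hji => hNd i (hji ▸ h), Finset.mem_univ _⟩
    have h3 := Finset.card_le_card h2
    rw [h1] at h3
    simpa [Finset.card_erase_of_mem, Finset.card_univ] using h3
  have hcard : (p : ℝ) + d ≤ (n:ℝ) - 1 := by
    have h4 : ((p + d : ℕ) : ℝ) ≤ ((n - 1 : ℕ) : ℝ) := by exact_mod_cast hcardn
    have : ((n - 1 : ℕ) : ℝ) = (n:ℝ) - 1 := by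
      have : 1 ≤ n := by omega
      push_cast [this]; ring
    rw [this] at h4; push_cast at h4; linarith
  have hcoef : α * B * p + β * D * d ≤ 1 := by
    have h1 : α * B * p ≤ α * p := by
      have hp0 : (0:ℝ) ≤ (p:ℝ) := Nat.cast_nonneg _
      have := mul_le_mul_of_nonneg_right (mul_le_mul_of_nonneg_left hB1 hα.le) hp0
      simpa using this
    have h2 : β * D * d ≤ β * d := by
      have hd0 : (0:ℝ) ≤ (d:ℝ) := Nat.cast_nonneg _
      have := mul_le_mul_of_nonneg_right (mul_le_mul_of_nonneg_left hD1 hβ.le) hd0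
      simpa using this
    have h3 : α * p + β * d ≤ (α + β) * ((p:ℝ) + d) := by
      have hp0 : (0:ℝ) ≤ (p:ℝ) := Nat.cast_nonneg _
      have hd0 : (0:ℝ) ≤ (d:ℝ) := Nat.cast_nonneg _
      nlinarith
    have h4 : (α + β) * ((p:ℝ) + d) ≤ (α + β) * ((n:ℝ) - 1) := by
      have : 0 ≤ α + β := by linarith
      nlinarith
    have h5 : (α + β) * ((n:ℝ) - 1) ≤ 1 := by
      rw [div_eq_inv_mul] at hαβ
      have := mul_le_mul_of_nonneg_right hαβ (le_of_lt hn1)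
      calc (α + β) * ((n:ℝ) - 1) ≤ ((n:ℝ)-1)⁻¹ * 1 * ((n:ℝ)-1) := this
        _ = 1 := by field_simp
    linarith
  have hrw : s' i = (1 - α * B * p - β * D * d) * s i
      + α * B * (∑ j ∈ Np i, s j) - β * D * (∑ j ∈ Nd i, s j) := by
    rw [hupd i]
    simp only [Finset.sum_sub_distrib, Finset.sum_add_distrib, Finset.sum_const,
      nsmul_eq_mul]
    ring
  have hsumP : |∑ j ∈ Np i, s j| ≤ (p:ℝ) * M := by
    calc |∑ j ∈ Np i, s j| ≤ ∑ j ∈ Np i, |s j| := Finset.abs_sum_le_sum_abs _ _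
      _ ≤ ∑ _j ∈ Np i, M := Finset.sum_le_sum fun j _ => hle j
      _ = (p:ℝ) * M := by rw [Finset.sum_const, nsmul_eq_mul]
  have hsumD : |∑ j ∈ Nd i, s j| ≤ (d:ℝ) * M := by
    calc |∑ j ∈ Nd i, s j| ≤ ∑ j ∈ Nd i, |s j| := Finset.abs_sum_le_sum_abs _ _
      _ ≤ ∑ _j ∈ Nd i, M := Finset.sum_le_sum fun j _ => hle j
      _ = (d:ℝ) * M := by rw [Finset.sum_const, nsmul_eq_mul]
  have hc0 : 0 ≤ 1 - α * B * p - β * D * d := by linarith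
  have hαB : 0 ≤ α * B := mul_nonneg (le_of_lt hα) hB0
  have hβD : 0 ≤ β * D := mul_nonneg (le_of_lt hβ) hD0
  calc |s' i| = |(1 - α * B * p - β * D * d) * s i
      + α * B * (∑ j ∈ Np i, s j) - β * D * (∑ j ∈ Nd i, s j)| := by rw [hrw]
    _ ≤ |(1 - α * B * p - β * D * d) * s i + α * B * (∑ j ∈ Np i, s j)|
        + |β * D * (∑ j ∈ Nd i, s j)| := abs_sub _ _
    _ ≤ |(1 - α * B * p - β * D * d) * s i| + |α * B * (∑ j ∈ Np i, s j)|
        + |β * D * (∑ j ∈ Nd i, s j)| := by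
        gcongr
        exact abs_add_le _ _
    _ ≤ (1 - α * B * p - β * D * d) * M + α * B * ((p:ℝ) * M)
        + β * D * ((d:ℝ) * M) := by
        have e1 : |(1 - α * B * p - β * D * d) * s i| ≤ (1 - α * B * p - β * D * d) * M := by
          rw [abs_mul, abs_of_nonneg hc0]
          exact mul_le_mul_of_nonneg_left (hle i) hc0
        have e2 : |α * B * (∑ j ∈ Np i, s j)| ≤ α * B * ((p:ℝ) * M) := by
          rw [abs_mul, abs_of_nonneg hαB]
          exact mul_le_mul_of_nonneg_left hsumP hαB
        have e3 : |β * D * (∑ j ∈ Nd i, s j)| ≤ β * D * ((d:ℝ) * M) := by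
          rw [abs_mul, abs_of_nonneg hβD]
          exact mul_le_mul_of_nonneg_left hsumD hβD
        linarith
    _ = M := by ring
end

section
/- Suppose that at time t every node i satisfies (α + β)·(|N_i^+(t)| + |N_i^-(t)|) ≤ 1 (for instance when α + β ≤ 1/Deg(𝒢_t), where Deg(𝒢_t) is the maximum in-degree of the time-t interaction graph). Then for every realization of the attention values B_t, D_t ∈ {0,1}, one step of the state-flipping update satisfies M(t+1) ≤ M(t). -/
/-- if at time `t` every node `i` satisfies
`(α + β)·(|N_i^+(t)| + |N_i^-(t)|) ≤ 1`, then one step of the state-flipping update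
satisfies `M(t+1) ≤ M(t)`. -/
theorem state_flipping_one_step_nonexpansive_degree
    {n : ℕ} (hn : 3 ≤ n)
    (α β : ℝ) (hα : 0 < α) (hβ : 0 < β)
    (Np Nd : Fin n → Finset (Fin n))
    (hNp : ∀ i, i ∉ Np i) (hNd : ∀ i, i ∉ Nd i)
    (hdisj : ∀ i, Disjoint (Np i) (Nd i))
    (hdeg : ∀ i, (α + β) * (((Np i).card : ℝ) + ((Nd i).card : ℝ)) ≤ 1)
    (B D : ℝ) (hB : B = 0 ∨ B = 1) (hD : D = 0 ∨ D = 1)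
    (s s' : Fin n → ℝ)
    (hupd : ∀ i, s' i = s i - α * B * (∑ j ∈ Np i, (s i - s j))
        - β * D * (∑ j ∈ Nd i, (s i + s j))) :
    Mmax hn s' ≤ Mmax hn s := by
  set M := Mmax hn s with hMdef
  have hM : ∀ j, |s j| ≤ M := fun j =>
    Finset.le_sup' (fun i => |s i|) (Finset.mem_univ j)
  have hM0 : 0 ≤ M := le_trans (abs_nonneg _) (hM ⟨0, by omega⟩)
  have hB0 : 0 ≤ B := by rcases hB with h | h <;> simp [h]
  have hB1 : B ≤ 1 := by rcases hB with h | h <;> simp [h]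
  have hD0 : 0 ≤ D := by rcases hD with h | h <;> simp [h]
  have hD1 : D ≤ 1 := by rcases hD with h | h <;> simp [h]
  apply Finset.sup'_le
  intro i _
  set p : ℝ := ((Np i).card : ℝ) with hp
  set d : ℝ := ((Nd i).card : ℝ) with hd
  have hp0 : 0 ≤ p := Nat.cast_nonneg _
  have hd0 : 0 ≤ d := Nat.cast_nonneg _
  have hc1 : α * B * p + β * D * d ≤ 1 := by
    have := hdeg i
    nlinarith [mul_nonneg hα.le hp0, mul_nonneg hβ.le hd0]
  have hc0 : 0 ≤ α * B * p + β * D * d := by positivity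
  have hsum1 : |∑ j ∈ Np i, s j| ≤ p * M := by
    calc |∑ j ∈ Np i, s j| ≤ ∑ j ∈ Np i, |s j| := Finset.abs_sum_le_sum_abs _ _
      _ ≤ (Np i).card • M := Finset.sum_le_card_nsmul _ _ M (fun j _ => hM j)
      _ = p * M := by simp [nsmul_eq_mul, hp]
  have hsum2 : |∑ j ∈ Nd i, s j| ≤ d * M := by
    calc |∑ j ∈ Nd i, s j| ≤ ∑ j ∈ Nd i, |s j| := Finset.abs_sum_le_sum_abs _ _
      _ ≤ (Nd i).card • M := Finset.sum_le_card_nsmul _ _ M (fun j _ => hM j)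
      _ = d * M := by simp [nsmul_eq_mul, hd]
  have hrw : s' i = (1 - (α * B * p + β * D * d)) * s i
      + α * B * (∑ j ∈ Np i, s j) - β * D * (∑ j ∈ Nd i, s j) := by
    rw [hupd i, Finset.sum_sub_distrib, Finset.sum_add_distrib,
      Finset.sum_const, Finset.sum_const]
    simp only [nsmul_eq_mul, ← hp, ← hd]
    ring
  rw [hrw]
  have h1 : |(1 - (α * B * p + β * D * d)) * s i| ≤ (1 - (α * B * p + β * D * d)) * M := by
    rw [abs_mul, abs_of_nonneg (by linarith)]
    exact mul_le_mul_of_nonneg_left (hM i) (by linarith)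
  have h2 : |α * B * (∑ j ∈ Np i, s j)| ≤ α * B * (p * M) := by
    rw [abs_mul, abs_of_nonneg (by positivity)]
    exact mul_le_mul_of_nonneg_left hsum1 (by positivity)
  have h3 : |β * D * (∑ j ∈ Nd i, s j)| ≤ β * D * (d * M) := by
    rw [abs_mul, abs_of_nonneg (by positivity)]
    exact mul_le_mul_of_nonneg_left hsum2 (by positivity)
  calc |(1 - (α * B * p + β * D * d)) * s i
      + α * B * (∑ j ∈ Np i, s j) - β * D * (∑ j ∈ Nd i, s j)|
      ≤ |(1 - (α * B * p + β * D * d)) * s i| + |α * B * (∑ j ∈ Np i, s j)|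
        + |β * D * (∑ j ∈ Nd i, s j)| := by
        exact le_trans (abs_sub _ _) (by gcongr; exact abs_add_le _ _)
    _ ≤ (1 - (α * B * p + β * D * d)) * M + α * B * (p * M) + β * D * (d * M) := by
        gcongr
    _ = M := by ring
end

section
/- Assume α + β ≤ 1/(n−1) and set γ_* = 1 − (α + β)(n−1). Let i ∈ V and suppose |s_i(t)| ≤ ζ_0·M(t) for some 0 < ζ_0 < 1. Then for every realization of the neighbor sets and attention values at times t, t+1, …, one has |s_i(t+k)| ≤ (1 − (1 − ζ_0)·γ_*^k)·M(t) for all k = 0, 1, 2, …. -/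
/-- if `α + β ≤ 1/(n-1)`, `γ_* = 1 - (α+β)(n-1)` and
`|s_i(t)| ≤ ζ₀·M(t)` with `0 < ζ₀ < 1`, then along every realization of the
state-flipping dynamics, `|s_i(t+k)| ≤ (1 - (1-ζ₀)·γ_*^k)·M(t)` for all `k`. -/
theorem state_flipping_small_state_stays_small
    {n : ℕ} (hn : 3 ≤ n)
    (α β : ℝ) (hα : 0 < α) (hβ : 0 < β)
    (hαβ : α + β ≤ 1 / ((n : ℝ) - 1))
    (Np Nd : ℕ → Fin n → Finset (Fin n))
    (hNp : ∀ t i, i ∉ Np t i) (hNd : ∀ t i, i ∉ Nd t i)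
    (hdisj : ∀ t i, Disjoint (Np t i) (Nd t i))
    (B D : ℕ → ℝ) (hB : ∀ t, B t = 0 ∨ B t = 1) (hD : ∀ t, D t = 0 ∨ D t = 1)
    (s : ℕ → Fin n → ℝ)
    (hupd : ∀ t i, s (t + 1) i = s t i - α * B t * (∑ j ∈ Np t i, (s t i - s t j))
        - β * D t * (∑ j ∈ Nd t i, (s t i + s t j)))
    (t : ℕ) (i : Fin n) (ζ₀ : ℝ) (hζ₀ : 0 < ζ₀) (hζ₁ : ζ₀ < 1)
    (hi : |s t i| ≤ ζ₀ * Mmax hn (s t)) :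
    ∀ k : ℕ, |s (t + k) i| ≤
      (1 - (1 - ζ₀) * (1 - (α + β) * ((n : ℝ) - 1)) ^ k) * Mmax hn (s t) := by
  set γ : ℝ := 1 - (α + β) * ((n : ℝ) - 1) with hγdef
  set M : ℝ := Mmax hn (s t) with hMdef
  have hn1 : (0:ℝ) < (n:ℝ) - 1 := by
    have : (3:ℝ) ≤ (n:ℝ) := by exact_mod_cast hn
    linarith
  have hαβ1 : (α + β) * ((n : ℝ) - 1) ≤ 1 := by
    have := (le_div_iff₀ hn1).mp hαβ
    linarith
  have hγ0 : 0 ≤ γ := by simp [hγdef]; linarith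
  have hγ1 : γ ≤ 1 := by
    have : 0 ≤ (α + β) * ((n : ℝ) - 1) := by positivity
    simp [hγdef]; linarith
  have hMj : ∀ j, |s t j| ≤ M := by
    intro j
    simp only [hMdef, Mmax]
    exact Finset.le_sup' (fun i => |s t i|) (Finset.mem_univ j)
  have hM0 : 0 ≤ M := le_trans (abs_nonneg _) (hMj ⟨0, by omega⟩)
  -- one-step contraction lemma
  have key : ∀ τ, (∀ j, |s τ j| ≤ M) → ∀ p : Fin n, ∀ ζ : ℝ, 0 ≤ ζ → ζ ≤ 1 →
      |s τ p| ≤ ζ * M → |s (τ + 1) p| ≤ (1 - (1 - ζ) * γ) * M := by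
    intro τ hτ p ζ hζ0 hζ1 hp
    have hB01 : 0 ≤ B τ ∧ B τ ≤ 1 := by rcases hB τ with h | h <;> rw [h] <;> norm_num
    have hD01 : 0 ≤ D τ ∧ D τ ≤ 1 := by rcases hD τ with h | h <;> rw [h] <;> norm_num
    set cp : ℝ := ((Np τ p).card : ℝ) with hcpdef
    set cd : ℝ := ((Nd τ p).card : ℝ) with hcddef
    have hcp0 : 0 ≤ cp := Nat.cast_nonneg _
    have hcd0 : 0 ≤ cd := Nat.cast_nonneg _
    have hcard : ∀ F : Finset (Fin n), p ∉ F → ((F.card : ℝ)) ≤ (n:ℝ) - 1 := by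
      intro F hpF
      have hsub : F ⊆ Finset.univ.erase p := by
        intro x hx
        exact Finset.mem_erase.mpr ⟨fun h => hpF (h ▸ hx), Finset.mem_univ x⟩
      have := Finset.card_le_card hsub
      have herase : (Finset.univ.erase p).card = n - 1 := by
        rw [Finset.card_erase_of_mem (Finset.mem_univ p), Finset.card_univ, Fintype.card_fin]
      rw [herase] at this
      have : (F.card : ℝ) ≤ ((n - 1 : ℕ) : ℝ) := by exact_mod_cast this
      have hn' : ((n - 1 : ℕ) : ℝ) = (n:ℝ) - 1 := by
        have : (1:ℕ) ≤ n := by omega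
        push_cast [this]; ring
      linarith [hn' ▸ this]
    have hcp1 : cp ≤ (n:ℝ) - 1 := hcard _ (hNp τ p)
    have hcd1 : cd ≤ (n:ℝ) - 1 := hcard _ (hNd τ p)
    set θ : ℝ := α * B τ * cp + β * D τ * cd with hθdef
    have hθ0 : 0 ≤ θ := by
      apply add_nonneg <;> apply mul_nonneg (mul_nonneg (by linarith) (by tauto)) <;> assumption
    have hθ1 : θ ≤ (α + β) * ((n:ℝ) - 1) := by
      have hb : B τ * cp ≤ 1 * ((n:ℝ) - 1) :=
        mul_le_mul hB01.2 hcp1 hcp0 (by norm_num)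
      have hd : D τ * cd ≤ 1 * ((n:ℝ) - 1) :=
        mul_le_mul hD01.2 hcd1 hcd0 (by norm_num)
      have h1 : α * B τ * cp ≤ α * ((n:ℝ) - 1) := by
        calc α * B τ * cp = α * (B τ * cp) := by ring
          _ ≤ α * (1 * ((n:ℝ) - 1)) := mul_le_mul_of_nonneg_left hb hα.le
          _ = α * ((n:ℝ) - 1) := by ring
      have h2 : β * D τ * cd ≤ β * ((n:ℝ) - 1) := by
        calc β * D τ * cd = β * (D τ * cd) := by ring
          _ ≤ β * (1 * ((n:ℝ) - 1)) := mul_le_mul_of_nonneg_left hd hβ.le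
          _ = β * ((n:ℝ) - 1) := by ring
      simp only [hθdef]; linarith
    have hθle1 : θ ≤ 1 := le_trans hθ1 hαβ1
    have hrw : s (τ + 1) p = (1 - θ) * s τ p + α * B τ * (∑ j ∈ Np τ p, s τ j)
        - β * D τ * (∑ j ∈ Nd τ p, s τ j) := by
      rw [hupd τ p]
      simp only [Finset.sum_sub_distrib, Finset.sum_add_distrib, Finset.sum_const,
        nsmul_eq_mul, hθdef, hcpdef, hcddef]
      ring
    have hsum1 : |∑ j ∈ Np τ p, s τ j| ≤ cp * M := by
      calc |∑ j ∈ Np τ p, s τ j| ≤ ∑ j ∈ Np τ p, |s τ j| := Finset.abs_sum_le_sum_abs _ _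
        _ ≤ ∑ _j ∈ Np τ p, M := Finset.sum_le_sum fun j _ => hτ j
        _ = cp * M := by rw [Finset.sum_const, nsmul_eq_mul]
    have hsum2 : |∑ j ∈ Nd τ p, s τ j| ≤ cd * M := by
      calc |∑ j ∈ Nd τ p, s τ j| ≤ ∑ j ∈ Nd τ p, |s τ j| := Finset.abs_sum_le_sum_abs _ _
        _ ≤ ∑ _j ∈ Nd τ p, M := Finset.sum_le_sum fun j _ => hτ j
        _ = cd * M := by rw [Finset.sum_const, nsmul_eq_mul]
    have habs : |s (τ + 1) p| ≤ (1 - θ) * |s τ p| + θ * M := by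
      rw [hrw]
      have h1 : |(1 - θ) * s τ p + α * B τ * (∑ j ∈ Np τ p, s τ j)
          - β * D τ * (∑ j ∈ Nd τ p, s τ j)|
          ≤ |(1 - θ) * s τ p| + |α * B τ * (∑ j ∈ Np τ p, s τ j)|
            + |β * D τ * (∑ j ∈ Nd τ p, s τ j)| := by
        calc _ ≤ |(1 - θ) * s τ p + α * B τ * (∑ j ∈ Np τ p, s τ j)|
              + |β * D τ * (∑ j ∈ Nd τ p, s τ j)| := abs_sub _ _
          _ ≤ _ := by gcongr; exact abs_add_le _ _
      have e1 : |(1 - θ) * s τ p| = (1 - θ) * |s τ p| := by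
        rw [abs_mul, abs_of_nonneg (by linarith : (0:ℝ) ≤ 1 - θ)]
      have e2 : |α * B τ * (∑ j ∈ Np τ p, s τ j)| ≤ α * B τ * (cp * M) := by
        rw [abs_mul, abs_of_nonneg (mul_nonneg hα.le hB01.1)]
        exact mul_le_mul_of_nonneg_left hsum1 (mul_nonneg hα.le hB01.1)
      have e3 : |β * D τ * (∑ j ∈ Nd τ p, s τ j)| ≤ β * D τ * (cd * M) := by
        rw [abs_mul, abs_of_nonneg (mul_nonneg hβ.le hD01.1)]
        exact mul_le_mul_of_nonneg_left hsum2 (mul_nonneg hβ.le hD01.1)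
      rw [e1] at h1
      have : α * B τ * (cp * M) + β * D τ * (cd * M) = θ * M := by
        simp only [hθdef]; ring
      linarith
    have hstep : (1 - θ) * |s τ p| ≤ (1 - θ) * (ζ * M) :=
      mul_le_mul_of_nonneg_left hp (by linarith)
    have hfin : (1 - θ) * (ζ * M) + θ * M ≤ (1 - (1 - ζ) * γ) * M := by
      nlinarith [mul_nonneg (mul_nonneg (by linarith : (0:ℝ) ≤ 1 - ζ) hM0)
        (by linarith : (0:ℝ) ≤ (1 - θ) - γ)]
    linarith
  -- induction
  have main : ∀ k : ℕ, (∀ j, |s (t + k) j| ≤ M) ∧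
      |s (t + k) i| ≤ (1 - (1 - ζ₀) * γ ^ k) * M := by
    intro k
    induction k with
    | zero =>
      refine ⟨by simpa using hMj, ?_⟩
      simpa using hi.trans_eq (by ring)
    | succ k ih =>
      obtain ⟨hall, hone⟩ := ih
      have hγk0 : 0 ≤ γ ^ k := pow_nonneg hγ0 k
      have hγk1 : γ ^ k ≤ 1 := pow_le_one₀ hγ0 hγ1
      constructor
      · intro j
        have := key (t + k) hall j 1 (by norm_num) (by norm_num)
          (by simpa using hall j)
        rw [← add_assoc]; simpa using this
      · have hζk0 : 0 ≤ 1 - (1 - ζ₀) * γ ^ k := by nlinarith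
        have hζk1 : 1 - (1 - ζ₀) * γ ^ k ≤ 1 := by nlinarith
        have := key (t + k) hall i (1 - (1 - ζ₀) * γ ^ k) hζk0 hζk1 hone
        have heq : (1 - (1 - (1 - (1 - ζ₀) * γ ^ k)) * γ) = 1 - (1 - ζ₀) * γ ^ (k + 1) := by
          rw [pow_succ]; ring
        rw [heq] at this
        exact this
  exact fun k => (main k).2
end

section
/- Assume α + β ≤ 1/(n−1). Let i, j ∈ V with i ≠ j and suppose |s_i(t)| ≤ ζ_0·M(t) for some 0 < ζ_0 < 1. If at time t either i ∈ N_j^+(t) and B_t = 1, or i ∈ N_j^-(t) and D_t = 1, then after one step of the state-flipping update, |s_j(t+1)| ≤ (1 − (1 − ζ_0)·min{α, β})·M(t). -/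
/-- if `α + β ≤ 1/(n-1)`, `|s_i(t)| ≤ ζ₀·M(t)` with `0 < ζ₀ < 1`, and
at time `t` either `i ∈ N_j^+(t)` and `B_t = 1` or `i ∈ N_j^-(t)` and `D_t = 1`,
then `|s_j(t+1)| ≤ (1 - (1-ζ₀)·min{α,β})·M(t)`. -/
theorem state_flipping_neighbor_pulled_down
    {n : ℕ} (hn : 3 ≤ n)
    (α β : ℝ) (hα : 0 < α) (hβ : 0 < β)
    (hαβ : α + β ≤ 1 / ((n : ℝ) - 1))
    (Np Nd : Fin n → Finset (Fin n))
    (hNp : ∀ i, i ∉ Np i) (hNd : ∀ i, i ∉ Nd i)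
    (hdisj : ∀ i, Disjoint (Np i) (Nd i))
    (B D : ℝ) (hB : B = 0 ∨ B = 1) (hD : D = 0 ∨ D = 1)
    (s s' : Fin n → ℝ)
    (hupd : ∀ k, s' k = s k - α * B * (∑ j ∈ Np k, (s k - s j))
        - β * D * (∑ j ∈ Nd k, (s k + s j)))
    (i j : Fin n) (hij : i ≠ j)
    (ζ₀ : ℝ) (hζ₀ : 0 < ζ₀) (hζ₁ : ζ₀ < 1)
    (hi : |s i| ≤ ζ₀ * Mmax hn s)
    (hedge : (i ∈ Np j ∧ B = 1) ∨ (i ∈ Nd j ∧ D = 1)) :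
    |s' j| ≤ (1 - (1 - ζ₀) * min α β) * Mmax hn s := by
  obtain ⟨M, hMdef⟩ : ∃ M : ℝ, Mmax hn s = M := ⟨_, rfl⟩
  rw [hMdef] at hi ⊢
  have hM : ∀ k, |s k| ≤ M := fun k =>
    hMdef ▸ Finset.le_sup' (fun i => |s i|) (Finset.mem_univ k)
  have hM0 : 0 ≤ M := le_trans (abs_nonneg _) (hM j)
  have hn1 : (0:ℝ) < (n:ℝ) - 1 := by
    have : (3:ℝ) ≤ (n:ℝ) := by exact_mod_cast hn
    linarith
  have hαβn : (α + β) * ((n:ℝ) - 1) ≤ 1 := by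
    rw [← le_div_iff₀ hn1]; exact hαβ
  have hB0 : 0 ≤ B := by rcases hB with h | h <;> rw [h] <;> norm_num
  have hB1 : B ≤ 1 := by rcases hB with h | h <;> rw [h] <;> norm_num
  have hD0 : 0 ≤ D := by rcases hD with h | h <;> rw [h] <;> norm_num
  have hD1 : D ≤ 1 := by rcases hD with h | h <;> rw [h] <;> norm_num
  -- card bounds
  have hcard : ∀ S : Finset (Fin n), j ∉ S → ((S.card : ℝ)) ≤ (n:ℝ) - 1 := by
    intro S hjS
    have hsub : S ⊆ Finset.univ.erase j := by
      intro x hx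
      exact Finset.mem_erase.mpr ⟨fun h => hjS (h ▸ hx), Finset.mem_univ x⟩
    have h1 := Finset.card_le_card hsub
    rw [Finset.card_erase_of_mem (Finset.mem_univ j), Finset.card_univ, Fintype.card_fin] at h1
    have h3 : 1 ≤ n := by omega
    have h2 : (S.card : ℝ) ≤ ((n - 1 : ℕ) : ℝ) := by exact_mod_cast h1
    rwa [Nat.cast_sub h3, Nat.cast_one] at h2
  have hsumabs : ∀ S : Finset (Fin n), |∑ k ∈ S, s k| ≤ (S.card : ℝ) * M := by
    intro S
    calc |∑ k ∈ S, s k| ≤ ∑ k ∈ S, |s k| := Finset.abs_sum_le_sum_abs _ _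
      _ ≤ S.card • M := Finset.sum_le_card_nsmul _ _ _ (fun k _ => hM k)
      _ = (S.card : ℝ) * M := nsmul_eq_mul _ _
  -- key reduction
  have key : ∀ c a r : ℝ, 0 ≤ c → 0 ≤ r → min α β ≤ a → c + a + r = 1 →
      |s' j| ≤ c * |s j| + a * |s i| + r * M →
      |s' j| ≤ (1 - (1 - ζ₀) * min α β) * M := by
    intro c a r hc hr ha hsum hx
    have hm0 : 0 < min α β := lt_min hα hβ
    have h1 : c * |s j| ≤ c * M := mul_le_mul_of_nonneg_left (hM j) hc
    have h2 : a * |s i| ≤ a * (ζ₀ * M) := mul_le_mul_of_nonneg_left hi (le_trans hm0.le ha)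
    have h3 : 0 ≤ (a - min α β) * ((1 - ζ₀) * M) :=
      mul_nonneg (by linarith) (mul_nonneg (by linarith) hM0)
    have h4 : c * M + a * M + r * M = M := by
      calc c * M + a * M + r * M = (c + a + r) * M := by ring
        _ = 1 * M := by rw [hsum]
        _ = M := one_mul M
    linarith only [h1, h2, h3, h4, hx]
  -- expand the update
  have e1 : ∑ k ∈ Np j, (s j - s k) = ((Np j).card : ℝ) * s j - ∑ k ∈ Np j, s k := by
    rw [Finset.sum_sub_distrib, Finset.sum_const, nsmul_eq_mul]
  have e2 : ∑ k ∈ Nd j, (s j + s k) = ((Nd j).card : ℝ) * s j + ∑ k ∈ Nd j, s k := by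
    rw [Finset.sum_add_distrib, Finset.sum_const, nsmul_eq_mul]
  have hpj : ((Np j).card : ℝ) ≤ (n:ℝ) - 1 := hcard _ (hNp j)
  have hdj : ((Nd j).card : ℝ) ≤ (n:ℝ) - 1 := hcard _ (hNd j)
  rcases hedge with ⟨hiNp, hBeq⟩ | ⟨hiNd, hDeq⟩
  · -- case i ∈ Np j, B = 1
    obtain ⟨p, hp⟩ : ∃ p : ℝ, ((Np j).card : ℝ) = p := ⟨_, rfl⟩
    obtain ⟨d, hd⟩ : ∃ d : ℝ, ((Nd j).card : ℝ) = d := ⟨_, rfl⟩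
    rw [hp] at e1 hpj
    rw [hd] at e2 hdj
    have hp1 : (1:ℝ) ≤ p := by
      have h1 : 1 ≤ (Np j).card := Finset.card_pos.mpr ⟨i, hiNp⟩
      rw [← hp]; exact_mod_cast h1
    have hd0 : (0:ℝ) ≤ d := by rw [← hd]; exact Nat.cast_nonneg _
    have e3 : ∑ k ∈ Np j, s k = s i + ∑ k ∈ (Np j).erase i, s k := by
      rw [← Finset.add_sum_erase _ _ hiNp]
    have hec : (((Np j).erase i).card : ℝ) = p - 1 := by
      rw [Finset.card_erase_of_mem hiNp, ← hp]
      have h1 : 1 ≤ (Np j).card := Finset.card_pos.mpr ⟨i, hiNp⟩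
      push_cast [Nat.cast_sub h1]
      ring
    have hap : α * p ≤ α * ((n:ℝ) - 1) := mul_le_mul_of_nonneg_left hpj hα.le
    have hbd : β * d ≤ β * ((n:ℝ) - 1) := mul_le_mul_of_nonneg_left hdj hβ.le
    have hbDd : β * D * d ≤ β * d := by
      linarith only [mul_nonneg (mul_nonneg (sub_nonneg.mpr hD1) hβ.le) hd0]
    have hc0 : 0 ≤ 1 - α * p - β * D * d := by linarith only [hap, hbd, hbDd, hαβn]
    have hr0 : 0 ≤ α * (p - 1) + β * D * d :=
      add_nonneg (mul_nonneg hα.le (by linarith only [hp1] : (0:ℝ) ≤ p - 1))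
        (mul_nonneg (mul_nonneg hβ.le hD0) hd0)
    apply key (1 - α * p - β * D * d) α (α * (p - 1) + β * D * d) hc0 hr0
      (min_le_left _ _) (by ring)
    have ha := hsumabs ((Np j).erase i)
    rw [hec] at ha
    have hb := hsumabs (Nd j)
    rw [hd] at hb
    have heq : s' j = (1 - α * p - β * D * d) * s j + α * s i
        + (α * (∑ k ∈ (Np j).erase i, s k) - β * D * (∑ k ∈ Nd j, s k)) := by
      rw [hupd j, hBeq, e1, e2, e3]; ring
    rw [heq]
    have h3 : |α * (∑ k ∈ (Np j).erase i, s k) - β * D * (∑ k ∈ Nd j, s k)|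
        ≤ α * |∑ k ∈ (Np j).erase i, s k| + β * D * |∑ k ∈ Nd j, s k| := by
      have := abs_sub (α * (∑ k ∈ (Np j).erase i, s k)) (β * D * (∑ k ∈ Nd j, s k))
      rwa [abs_mul, abs_mul, abs_of_nonneg hα.le,
        abs_of_nonneg (mul_nonneg hβ.le hD0)] at this
    have h4 : α * |∑ k ∈ (Np j).erase i, s k| ≤ α * ((p - 1) * M) :=
      mul_le_mul_of_nonneg_left ha hα.le
    have h5 : β * D * |∑ k ∈ Nd j, s k| ≤ β * D * (d * M) :=
      mul_le_mul_of_nonneg_left hb (mul_nonneg hβ.le hD0)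
    calc |(1 - α * p - β * D * d) * s j + α * s i
        + (α * (∑ k ∈ (Np j).erase i, s k) - β * D * (∑ k ∈ Nd j, s k))|
        ≤ |(1 - α * p - β * D * d) * s j| + |α * s i|
          + |α * (∑ k ∈ (Np j).erase i, s k) - β * D * (∑ k ∈ Nd j, s k)| :=
          abs_add_three _ _ _
      _ ≤ (1 - α * p - β * D * d) * |s j| + α * |s i| + (α * (p - 1) + β * D * d) * M := by
          rw [abs_mul, abs_mul, abs_of_nonneg hc0, abs_of_nonneg hα.le]
          linarith only [h3, h4, h5]
  · -- case i ∈ Nd j, D = 1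
    obtain ⟨p, hp⟩ : ∃ p : ℝ, ((Np j).card : ℝ) = p := ⟨_, rfl⟩
    obtain ⟨d, hd⟩ : ∃ d : ℝ, ((Nd j).card : ℝ) = d := ⟨_, rfl⟩
    rw [hp] at e1 hpj
    rw [hd] at e2 hdj
    have hd1 : (1:ℝ) ≤ d := by
      have h1 : 1 ≤ (Nd j).card := Finset.card_pos.mpr ⟨i, hiNd⟩
      rw [← hd]; exact_mod_cast h1
    have hp0 : (0:ℝ) ≤ p := by rw [← hp]; exact Nat.cast_nonneg _
    have e3 : ∑ k ∈ Nd j, s k = s i + ∑ k ∈ (Nd j).erase i, s k := by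
      rw [← Finset.add_sum_erase _ _ hiNd]
    have hec : (((Nd j).erase i).card : ℝ) = d - 1 := by
      rw [Finset.card_erase_of_mem hiNd, ← hd]
      have h1 : 1 ≤ (Nd j).card := Finset.card_pos.mpr ⟨i, hiNd⟩
      push_cast [Nat.cast_sub h1]
      ring
    have hap : α * p ≤ α * ((n:ℝ) - 1) := mul_le_mul_of_nonneg_left hpj hα.le
    have hbd : β * d ≤ β * ((n:ℝ) - 1) := mul_le_mul_of_nonneg_left hdj hβ.le
    have haBp : α * B * p ≤ α * p := by
      linarith only [mul_nonneg (mul_nonneg (sub_nonneg.mpr hB1) hα.le) hp0]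
    have hc0 : 0 ≤ 1 - α * B * p - β * d := by linarith only [hap, hbd, haBp, hαβn]
    have hr0 : 0 ≤ α * B * p + β * (d - 1) :=
      add_nonneg (mul_nonneg (mul_nonneg hα.le hB0) hp0)
        (mul_nonneg hβ.le (by linarith only [hd1] : (0:ℝ) ≤ d - 1))
    apply key (1 - α * B * p - β * d) β (α * B * p + β * (d - 1)) hc0 hr0
      (min_le_right _ _) (by ring)
    have ha := hsumabs ((Nd j).erase i)
    rw [hec] at ha
    have hb := hsumabs (Np j)
    rw [hp] at hb
    have heq : s' j = (1 - α * B * p - β * d) * s j + (-β) * s i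
        + (α * B * (∑ k ∈ Np j, s k) - β * (∑ k ∈ (Nd j).erase i, s k)) := by
      rw [hupd j, hDeq, e1, e2, e3]; ring
    rw [heq]
    have h3 : |α * B * (∑ k ∈ Np j, s k) - β * (∑ k ∈ (Nd j).erase i, s k)|
        ≤ α * B * |∑ k ∈ Np j, s k| + β * |∑ k ∈ (Nd j).erase i, s k| := by
      have := abs_sub (α * B * (∑ k ∈ Np j, s k)) (β * (∑ k ∈ (Nd j).erase i, s k))
      rwa [abs_mul (α * B), abs_mul β, abs_of_nonneg hβ.le,
        abs_of_nonneg (mul_nonneg hα.le hB0)] at this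
    have h4 : β * |∑ k ∈ (Nd j).erase i, s k| ≤ β * ((d - 1) * M) :=
      mul_le_mul_of_nonneg_left ha hβ.le
    have h5 : α * B * |∑ k ∈ Np j, s k| ≤ α * B * (p * M) :=
      mul_le_mul_of_nonneg_left hb (mul_nonneg hα.le hB0)
    calc |(1 - α * B * p - β * d) * s j + (-β) * s i
        + (α * B * (∑ k ∈ Np j, s k) - β * (∑ k ∈ (Nd j).erase i, s k))|
        ≤ |(1 - α * B * p - β * d) * s j| + |(-β) * s i|
          + |α * B * (∑ k ∈ Np j, s k) - β * (∑ k ∈ (Nd j).erase i, s k)| :=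
          abs_add_three _ _ _
      _ ≤ (1 - α * B * p - β * d) * |s j| + β * |s i| + (α * B * p + β * (d - 1)) * M := by
          rw [abs_mul, abs_mul, abs_of_nonneg hc0, abs_neg, abs_of_nonneg hβ.le]
          linarith only [h3, h4, h5]
end

section
/- Assume α + β ≤ 1/(n−1). Let i, j ∈ V with i ≠ j. If at time t either i ∈ N_j^+(t) and B_t = 1, or i ∈ N_j^-(t) and D_t = 1, then after one step of the state-flipping update, |s_j(t+1)| ≤ min{α, β}·|s_i(t)| + (1 − min{α, β})·M(t). -/
private lemma sum_abs_extract {n : ℕ} (A : Finset (Fin n)) (i : Fin n) (hi : i ∈ A)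
    (s : Fin n → ℝ) (M : ℝ) (hM : ∀ k, |s k| ≤ M) :
    ∑ k ∈ A, |s k| ≤ |s i| + ((A.card : ℝ) - 1) * M := by
  rw [← Finset.sum_erase_add A _ hi]
  have h1 : ∑ k ∈ A.erase i, |s k| ≤ (A.erase i).card • M :=
    Finset.sum_le_card_nsmul _ _ _ (fun x _ => hM x)
  have h2 : ((A.erase i).card : ℝ) = (A.card : ℝ) - 1 := by
    rw [Finset.card_erase_of_mem hi]
    have : 1 ≤ A.card := Finset.card_pos.mpr ⟨i, hi⟩
    push_cast [Nat.cast_sub this]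
    ring
  rw [nsmul_eq_mul, h2] at h1
  linarith

private lemma sum_abs_le {n : ℕ} (A : Finset (Fin n))
    (s : Fin n → ℝ) (M : ℝ) (hM : ∀ k, |s k| ≤ M) :
    ∑ k ∈ A, |s k| ≤ (A.card : ℝ) * M := by
  have h1 : ∑ k ∈ A, |s k| ≤ A.card • M :=
    Finset.sum_le_card_nsmul _ _ _ (fun x _ => hM x)
  rwa [nsmul_eq_mul] at h1

set_option maxHeartbeats 1600000 in
/-- if `α + β ≤ 1/(n-1)` and at time `t` either `i ∈ N_j^+(t)` with
`B_t = 1` or `i ∈ N_j^-(t)` with `D_t = 1`, then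
`|s_j(t+1)| ≤ min{α,β}·|s_i(t)| + (1 - min{α,β})·M(t)`. -/
theorem state_flipping_neighbor_one_step_bound
    {n : ℕ} (hn : 3 ≤ n)
    (α β : ℝ) (hα : 0 < α) (hβ : 0 < β)
    (hαβ : α + β ≤ 1 / ((n : ℝ) - 1))
    (Np Nd : Fin n → Finset (Fin n))
    (hNp : ∀ i, i ∉ Np i) (hNd : ∀ i, i ∉ Nd i)
    (hdisj : ∀ i, Disjoint (Np i) (Nd i))
    (B D : ℝ) (hB : B = 0 ∨ B = 1) (hD : D = 0 ∨ D = 1)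
    (s s' : Fin n → ℝ)
    (hupd : ∀ k, s' k = s k - α * B * (∑ j ∈ Np k, (s k - s j))
        - β * D * (∑ j ∈ Nd k, (s k + s j)))
    (i j : Fin n) (hij : i ≠ j)
    (hedge : (i ∈ Np j ∧ B = 1) ∨ (i ∈ Nd j ∧ D = 1)) :
    |s' j| ≤ min α β * |s i| + (1 - min α β) * Mmax hn s := by
  set M := Mmax hn s with hMdef
  have hMle : ∀ k, |s k| ≤ M := fun k =>
    Finset.le_sup' (fun i => |s i|) (Finset.mem_univ k)
  have hM0 : 0 ≤ M := le_trans (abs_nonneg (s j)) (hMle j)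
  have hn1 : (0:ℝ) < (n:ℝ) - 1 := by
    have : (3:ℝ) ≤ (n:ℝ) := by exact_mod_cast hn
    linarith
  set c := α * B with hc
  set d := β * D with hd
  have hc01 : (c = 0 ∨ c = α) := by rcases hB with h | h <;> simp [hc, h]
  have hd01 : (d = 0 ∨ d = β) := by rcases hD with h | h <;> simp [hd, h]
  have hc0 : 0 ≤ c := by rcases hc01 with h | h <;> rw [h] <;> linarith
  have hd0 : 0 ≤ d := by rcases hd01 with h | h <;> rw [h] <;> linarith
  have hcα : c ≤ α := by rcases hc01 with h | h <;> rw [h] <;> linarith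
  have hdβ : d ≤ β := by rcases hd01 with h | h <;> rw [h] <;> linarith
  -- cardinality bounds
  have hcardp : ((Np j).card : ℝ) ≤ (n:ℝ) - 1 := by
    have h1 : (Np j).card ≤ (Finset.univ.erase j).card :=
      Finset.card_le_card (fun x hx => Finset.mem_erase.mpr
        ⟨fun he => hNp j (he ▸ hx), Finset.mem_univ x⟩)
    have h2 : (Finset.univ.erase j).card = n - 1 := by
      rw [Finset.card_erase_of_mem (Finset.mem_univ j), Finset.card_univ, Fintype.card_fin]
    have h3 : (Np j).card ≤ n - 1 := h2 ▸ h1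
    have : ((Np j).card : ℝ) ≤ ((n - 1 : ℕ) : ℝ) := by exact_mod_cast h3
    rwa [Nat.cast_sub (by omega), Nat.cast_one] at this
  have hcardd : ((Nd j).card : ℝ) ≤ (n:ℝ) - 1 := by
    have h1 : (Nd j).card ≤ (Finset.univ.erase j).card :=
      Finset.card_le_card (fun x hx => Finset.mem_erase.mpr
        ⟨fun he => hNd j (he ▸ hx), Finset.mem_univ x⟩)
    have h2 : (Finset.univ.erase j).card = n - 1 := by
      rw [Finset.card_erase_of_mem (Finset.mem_univ j), Finset.card_univ, Fintype.card_fin]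
    have h3 : (Nd j).card ≤ n - 1 := h2 ▸ h1
    have : ((Nd j).card : ℝ) ≤ ((n - 1 : ℕ) : ℝ) := by exact_mod_cast h3
    rwa [Nat.cast_sub (by omega), Nat.cast_one] at this
  set p := ((Np j).card : ℝ) with hp
  set q := ((Nd j).card : ℝ) with hq
  have hp0 : 0 ≤ p := Nat.cast_nonneg _
  have hq0 : 0 ≤ q := Nat.cast_nonneg _
  clear_value M c d p q
  have hαβ1 : (α + β) * ((n:ℝ) - 1) ≤ 1 := by
    rw [le_div_iff₀ hn1] at hαβ; exact hαβ
  have hkey : c * p + d * q ≤ 1 := by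
    have h1 : c * p ≤ α * ((n:ℝ) - 1) := by
      apply mul_le_mul hcα hcardp hp0 (le_of_lt hα)
    have h2 : d * q ≤ β * ((n:ℝ) - 1) := by
      apply mul_le_mul hdβ hcardd hq0 (le_of_lt hβ)
    nlinarith
  -- rewrite s' j
  have hsj : s' j = (1 - c * p - d * q) * s j
      + c * (∑ k ∈ Np j, s k) - d * (∑ k ∈ Nd j, s k) := by
    rw [hupd j, Finset.sum_sub_distrib, Finset.sum_add_distrib,
      Finset.sum_const, Finset.sum_const, nsmul_eq_mul, nsmul_eq_mul]
    simp only [hc, hd, hp, hq]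
    ring
  -- triangle inequality
  have htri : |s' j| ≤ (1 - c * p - d * q) * |s j|
      + c * (∑ k ∈ Np j, |s k|) + d * (∑ k ∈ Nd j, |s k|) := by
    rw [hsj]
    have h1 : |(1 - c * p - d * q) * s j + c * (∑ k ∈ Np j, s k) - d * (∑ k ∈ Nd j, s k)|
        ≤ |(1 - c * p - d * q) * s j| + |c * (∑ k ∈ Np j, s k)| + |d * (∑ k ∈ Nd j, s k)| := by
      calc _ ≤ |(1 - c * p - d * q) * s j + c * (∑ k ∈ Np j, s k)| + |d * (∑ k ∈ Nd j, s k)| :=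
            abs_sub _ _
        _ ≤ _ := by
            have := abs_add_le ((1 - c * p - d * q) * s j) (c * (∑ k ∈ Np j, s k))
            linarith
    have h2 : |(1 - c * p - d * q) * s j| = (1 - c * p - d * q) * |s j| := by
      rw [abs_mul, abs_of_nonneg (by linarith : (0:ℝ) ≤ 1 - c * p - d * q)]
    have h3 : |c * (∑ k ∈ Np j, s k)| ≤ c * (∑ k ∈ Np j, |s k|) := by
      rw [abs_mul, abs_of_nonneg hc0]
      exact mul_le_mul_of_nonneg_left (Finset.abs_sum_le_sum_abs _ _) hc0
    have h4 : |d * (∑ k ∈ Nd j, s k)| ≤ d * (∑ k ∈ Nd j, |s k|) := by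
      rw [abs_mul, abs_of_nonneg hd0]
      exact mul_le_mul_of_nonneg_left (Finset.abs_sum_le_sum_abs _ _) hd0
    linarith
  set m := min α β with hm
  clear_value m
  have hmα : m ≤ α := by rw [hm]; exact min_le_left _ _
  have hmβ : m ≤ β := by rw [hm]; exact min_le_right _ _
  have hsiM : |s i| ≤ M := hMle i
  rcases hedge with ⟨hiNp, hB1⟩ | ⟨hiNd, hD1⟩
  · have hcα' : c = α := by simp [hc, hB1]
    have hext := sum_abs_extract (Np j) i hiNp s M hMle
    have hsum2 := sum_abs_le (Nd j) s M hMle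
    rw [← hp] at hext
    rw [← hq] at hsum2
    have hjM : (1 - c * p - d * q) * |s j| ≤ (1 - c * p - d * q) * M :=
      mul_le_mul_of_nonneg_left (hMle j) (by linarith)
    have h5 : c * (∑ k ∈ Np j, |s k|) ≤ c * (|s i| + (p - 1) * M) :=
      mul_le_mul_of_nonneg_left hext hc0
    have h6 : d * (∑ k ∈ Nd j, |s k|) ≤ d * (q * M) :=
      mul_le_mul_of_nonneg_left hsum2 hd0
    have hbound : |s' j| ≤ α * |s i| + (1 - α) * M := by
      rw [hcα'] at htri h5 hjM
      have e1 : α * (|s i| + (p - 1) * M) = α * |s i| + α * p * M - α * M := by ring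
      have e2 : (1 - α * p - d * q) * M = M - α * p * M - d * q * M := by ring
      have e3 : d * (q * M) = d * q * M := by ring
      linarith
    have h7 : 0 ≤ α * M - α * |s i| - m * M + m * |s i| := by
      have := mul_nonneg (sub_nonneg.mpr hmα) (sub_nonneg.mpr hsiM)
      nlinarith
    have e4 : m * |s i| + (1 - m) * M = m * |s i| + M - m * M := by ring
    linarith
  · have hdβ' : d = β := by simp [hd, hD1]
    have hext := sum_abs_extract (Nd j) i hiNd s M hMle
    have hsum2 := sum_abs_le (Np j) s M hMle
    rw [← hq] at hext
    rw [← hp] at hsum2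
    have hjM : (1 - c * p - d * q) * |s j| ≤ (1 - c * p - d * q) * M :=
      mul_le_mul_of_nonneg_left (hMle j) (by linarith)
    have h5 : d * (∑ k ∈ Nd j, |s k|) ≤ d * (|s i| + (q - 1) * M) :=
      mul_le_mul_of_nonneg_left hext hd0
    have h6 : c * (∑ k ∈ Np j, |s k|) ≤ c * (p * M) :=
      mul_le_mul_of_nonneg_left hsum2 hc0
    have hbound : |s' j| ≤ β * |s i| + (1 - β) * M := by
      rw [hdβ'] at htri h5 hjM
      have e1 : β * (|s i| + (q - 1) * M) = β * |s i| + β * q * M - β * M := by ring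
      have e2 : (1 - c * p - β * q) * M = M - c * p * M - β * q * M := by ring
      have e3 : c * (p * M) = c * p * M := by ring
      linarith
    have h7 : 0 ≤ β * M - β * |s i| - m * M + m * |s i| := by
      have := mul_nonneg (sub_nonneg.mpr hmβ) (sub_nonneg.mpr hsiM)
      nlinarith
    have e4 : m * |s i| + (1 - m) * M = m * |s i| + M - m * M := by ring
    linarith
end

section
/- Assume α + β ≤ 1/(n−1) and set γ_* = 1 − (α + β)(n−1). Then for every realization of the neighbor sets and attention values at times t, t+1, …, every node i ∈ V, and every k = 0, 1, 2, …, the (signed) state satisfies s_i(t+k) ≤ γ_*^k·s_i(t) + (1 − γ_*^k)·M(t). -/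
lemma le_Mmax {n : ℕ} (hn : 3 ≤ n) (x : Fin n → ℝ) (j : Fin n) :
    |x j| ≤ Mmax hn x := by
  unfold Mmax
  exact Finset.le_sup' (fun i => |x i|) (Finset.mem_univ j)

/-- if `α + β ≤ 1/(n-1)` and `γ_* = 1 - (α+β)(n-1)`, then along every
realization of the state-flipping dynamics, every node `i` and every `k ≥ 0` satisfy
`s_i(t+k) ≤ γ_*^k·s_i(t) + (1 - γ_*^k)·M(t)`. -/
theorem state_flipping_signed_state_upper_bound
    {n : ℕ} (hn : 3 ≤ n)
    (α β : ℝ) (hα : 0 < α) (hβ : 0 < β)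
    (hαβ : α + β ≤ 1 / ((n : ℝ) - 1))
    (Np Nd : ℕ → Fin n → Finset (Fin n))
    (hNp : ∀ t i, i ∉ Np t i) (hNd : ∀ t i, i ∉ Nd t i)
    (hdisj : ∀ t i, Disjoint (Np t i) (Nd t i))
    (B D : ℕ → ℝ) (hB : ∀ t, B t = 0 ∨ B t = 1) (hD : ∀ t, D t = 0 ∨ D t = 1)
    (s : ℕ → Fin n → ℝ)
    (hupd : ∀ t i, s (t + 1) i = s t i - α * B t * (∑ j ∈ Np t i, (s t i - s t j))
        - β * D t * (∑ j ∈ Nd t i, (s t i + s t j)))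
    (t : ℕ) :
    ∀ (i : Fin n) (k : ℕ), s (t + k) i ≤
      (1 - (α + β) * ((n : ℝ) - 1)) ^ k * s t i
        + (1 - (1 - (α + β) * ((n : ℝ) - 1)) ^ k) * Mmax hn (s t) := by
  set γ : ℝ := 1 - (α + β) * ((n : ℝ) - 1) with hγdef
  have hn1 : (2:ℝ) ≤ (n : ℝ) - 1 := by
    have : (3:ℝ) ≤ (n:ℝ) := by exact_mod_cast hn
    linarith
  have hγ0 : 0 ≤ γ := by
    have h := mul_le_mul_of_nonneg_right hαβ (by linarith : (0:ℝ) ≤ (n:ℝ) - 1)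
    rw [one_div, inv_mul_cancel₀ (by linarith : (n:ℝ) - 1 ≠ 0)] at h
    simp only [hγdef]; linarith
  have hγ1 : γ ≤ 1 := by
    have : 0 ≤ (α + β) * ((n:ℝ) - 1) := by positivity
    simp only [hγdef]; linarith
  -- basic bounds via Mmax
  have hle : ∀ (u : ℕ) (j : Fin n), s u j ≤ Mmax hn (s u) :=
    fun u j => (le_abs_self _).trans (le_Mmax hn (s u) j)
  have hge : ∀ (u : ℕ) (j : Fin n), -(Mmax hn (s u)) ≤ s u j :=
    fun u j => neg_le_of_neg_le ((neg_le_abs _).trans (le_Mmax hn (s u) j))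
  -- cardinality bounds
  have hcard : ∀ (i : Fin n) (F : Finset (Fin n)),
      i ∉ F → ((F.card : ℝ)) ≤ (n : ℝ) - 1 := by
    intro i F hF
    have hsub : F ⊆ Finset.univ.erase i := by
      intro j hj
      refine Finset.mem_erase.2 ⟨?_, Finset.mem_univ _⟩
      rintro rfl; exact hF hj
    have h1 : F.card ≤ n - 1 := by
      have := Finset.card_le_card hsub
      rwa [Finset.card_erase_of_mem (Finset.mem_univ i), Finset.card_univ,
        Fintype.card_fin] at this
    have h2 : ((F.card : ℕ) : ℝ) ≤ ((n - 1 : ℕ) : ℝ) := by exact_mod_cast h1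
    rwa [Nat.cast_sub (by omega), Nat.cast_one] at h2
  -- one step key bound
  have key : ∀ (u : ℕ) (i : Fin n),
      s (u + 1) i ≤ γ * s u i + (1 - γ) * Mmax hn (s u) ∧
      |s (u + 1) i| ≤ Mmax hn (s u) := by
    intro u i
    set M := Mmax hn (s u) with hM
    set p : ℝ := ((Np u i).card : ℝ) with hpdef
    set d : ℝ := ((Nd u i).card : ℝ) with hddef
    set SP : ℝ := ∑ j ∈ Np u i, s u j with hSPdef
    set SD : ℝ := ∑ j ∈ Nd u i, s u j with hSDdef
    have hleM : ∀ j, s u j ≤ M := by intro j; rw [hM]; exact hle u j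
    have hgeM : ∀ j, -M ≤ s u j := by intro j; rw [hM]; exact hge u j
    have hexp : s (u + 1) i
        = (1 - α * B u * p - β * D u * d) * s u i + α * B u * SP - β * D u * SD := by
      rw [hupd u i]
      simp only [Finset.sum_sub_distrib, Finset.sum_add_distrib, Finset.sum_const,
        nsmul_eq_mul, ← hpdef, ← hddef, ← hSPdef, ← hSDdef]
      ring
    have hp0 : 0 ≤ p := hpdef ▸ Nat.cast_nonneg _
    have hd0 : 0 ≤ d := hddef ▸ Nat.cast_nonneg _
    have hp1 : p ≤ (n:ℝ) - 1 := hcard i (Np u i) (hNp u i)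
    have hd1 : d ≤ (n:ℝ) - 1 := hcard i (Nd u i) (hNd u i)
    have hB0 : 0 ≤ B u := by rcases hB u with h | h <;> rw [h] <;> norm_num
    have hB1 : B u ≤ 1 := by rcases hB u with h | h <;> rw [h] <;> norm_num
    have hD0 : 0 ≤ D u := by rcases hD u with h | h <;> rw [h] <;> norm_num
    have hD1 : D u ≤ 1 := by rcases hD u with h | h <;> rw [h] <;> norm_num
    have hM0 : 0 ≤ M := by rw [hM]; exact (abs_nonneg _).trans (le_Mmax hn (s u) i)
    -- sum bounds
    have hSPle : SP ≤ p * M := by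
      calc SP ≤ ∑ _j ∈ Np u i, M := Finset.sum_le_sum (fun j _ => hleM j)
        _ = p * M := by rw [Finset.sum_const, nsmul_eq_mul]
    have hSPge : -(p * M) ≤ SP := by
      calc -(p * M) = ∑ _j ∈ Np u i, -M := by rw [Finset.sum_const, nsmul_eq_mul]; ring
        _ ≤ SP := Finset.sum_le_sum (fun j _ => hgeM j)
    have hSDle : SD ≤ d * M := by
      calc SD ≤ ∑ _j ∈ Nd u i, M := Finset.sum_le_sum (fun j _ => hleM j)
        _ = d * M := by rw [Finset.sum_const, nsmul_eq_mul]
    have hSDge : -(d * M) ≤ SD := by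
      calc -(d * M) = ∑ _j ∈ Nd u i, -M := by rw [Finset.sum_const, nsmul_eq_mul]; ring
        _ ≤ SD := Finset.sum_le_sum (fun j _ => hgeM j)
    -- coefficient bounds
    have hcoefp : α * B u * p ≤ α * ((n:ℝ) - 1) := by
      nlinarith [mul_nonneg (sub_nonneg.2 hB1) hp0]
    have hcoefd : β * D u * d ≤ β * ((n:ℝ) - 1) := by
      nlinarith [mul_nonneg (sub_nonneg.2 hD1) hd0]
    have hcs : γ ≤ 1 - α * B u * p - β * D u * d := by
      simp only [hγdef]; nlinarith
    have hBp0 : 0 ≤ α * B u * p := mul_nonneg (mul_nonneg hα.le hB0) hp0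
    have hDd0 : 0 ≤ β * D u * d := mul_nonneg (mul_nonneg hβ.le hD0) hd0
    clear_value M p d SP SD
    -- upper bound in the key form
    have hup : s (u + 1) i ≤ γ * s u i + (1 - γ) * M := by
      rw [hexp]
      have h2 : α * B u * SP ≤ α * B u * (p * M) :=
        mul_le_mul_of_nonneg_left hSPle (mul_nonneg hα.le hB0)
      have h3 : β * D u * (-(d * M)) ≤ β * D u * SD :=
        mul_le_mul_of_nonneg_left hSDge (mul_nonneg hβ.le hD0)
      have h4 : (1 - α * B u * p - β * D u * d - γ) * (M - s u i) ≥ 0 :=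
        mul_nonneg (by linarith) (by linarith [hleM i])
      linarith [h2, h3, h4]
    refine ⟨hup, abs_le.2 ⟨?_, ?_⟩⟩
    · -- lower bound: -M ≤ s(u+1) i
      rw [hexp]
      have h2 : α * B u * (-(p * M)) ≤ α * B u * SP :=
        mul_le_mul_of_nonneg_left hSPge (mul_nonneg hα.le hB0)
      have h3 : β * D u * SD ≤ β * D u * (d * M) :=
        mul_le_mul_of_nonneg_left hSDle (mul_nonneg hβ.le hD0)
      have h4 : (1 - α * B u * p - β * D u * d) * (s u i + M) ≥ 0 :=
        mul_nonneg (by linarith) (by linarith [hgeM i])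
      linarith [h2, h3, h4]
    · have : γ * s u i + (1 - γ) * M ≤ M := by
        linarith [mul_nonneg hγ0 (sub_nonneg.2 (hleM i))]
      linarith
  -- monotonicity of Mmax
  have hMmono : ∀ u : ℕ, Mmax hn (s (u + 1)) ≤ Mmax hn (s u) := by
    intro u
    apply Finset.sup'_le
    intro j _
    exact (key u j).2
  have hMk : ∀ k : ℕ, Mmax hn (s (t + k)) ≤ Mmax hn (s t) := by
    intro k
    induction k with
    | zero => simp
    | succ k ih => exact (hMmono (t + k)).trans ih
  intro i k
  induction k with
  | zero => simp
  | succ k ih =>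
    have hstep := (key (t + k) i).1
    have hpow0 : 0 ≤ γ ^ k := pow_nonneg hγ0 k
    calc s (t + (k + 1)) i = s (t + k + 1) i := rfl
      _ ≤ γ * s (t + k) i + (1 - γ) * Mmax hn (s (t + k)) := hstep
      _ ≤ γ * (γ ^ k * s t i + (1 - γ ^ k) * Mmax hn (s t))
            + (1 - γ) * Mmax hn (s t) := by
          have h1 := mul_le_mul_of_nonneg_left ih hγ0
          have h2 := mul_le_mul_of_nonneg_left (hMk k) (by linarith : (0:ℝ) ≤ 1 - γ)
          linarith
      _ = γ ^ (k + 1) * s t i + (1 - γ ^ (k + 1)) * Mmax hn (s t) := by ring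
end

section
/- Assume α < 1/(4n), D_t = 1, and let 0 ≤ Z_1 < Z_2 satisfy n·Z_2 < 1/4 and β·Z_2 ≥ 2. Suppose there is a node i_1 with s_{i_1}(t) ∈ [(1 − Z_2)·M(t), (1 − Z_1)·M(t)] and a node j_* ∈ N_{i_1}^-(t) with s_{j_*}(t) ≥ −(1 − n·Z_2)·M(t). Then after one step of the state-flipping update, M(t+1) ≥ M(t)/2. -/
set_option maxHeartbeats 2000000 in
/-- suppose `α < 1/(4n)`, `D_t = 1`, `0 ≤ Z₁ < Z₂`, `n·Z₂ < 1/4`,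
`β·Z₂ ≥ 2`, there is a node `i₁` with `s_{i₁}(t) ∈ [(1-Z₂)M(t), (1-Z₁)M(t)]` and a
node `j_* ∈ N_{i₁}^-(t)` with `s_{j_*}(t) ≥ -(1 - n·Z₂)·M(t)`. Then `M(t+1) ≥ M(t)/2`. -/
theorem state_flipping_negative_kick_lower_bound
    {n : ℕ} (hn : 3 ≤ n)
    (α β : ℝ) (hα : 0 < α) (hβ : 0 < β)
    (hα4n : α < 1 / (4 * (n : ℝ)))
    (Np Nd : Fin n → Finset (Fin n))
    (hNp : ∀ i, i ∉ Np i) (hNd : ∀ i, i ∉ Nd i)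
    (hdisj : ∀ i, Disjoint (Np i) (Nd i))
    (B D : ℝ) (hB : B = 0 ∨ B = 1) (hD : D = 1)
    (Z₁ Z₂ : ℝ) (hZ₁ : 0 ≤ Z₁) (hZ₁₂ : Z₁ < Z₂)
    (hZ₂n : (n : ℝ) * Z₂ < 1 / 4) (hβZ₂ : β * Z₂ ≥ 2)
    (s s' : Fin n → ℝ)
    (i₁ : Fin n)
    (hi₁l : (1 - Z₂) * Mmax hn s ≤ s i₁) (hi₁u : s i₁ ≤ (1 - Z₁) * Mmax hn s)
    (jstar : Fin n) (hjstar : jstar ∈ Nd i₁)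
    (hjs : -(1 - (n : ℝ) * Z₂) * Mmax hn s ≤ s jstar)
    (hupd : ∀ i, s' i = s i - α * B * (∑ j ∈ Np i, (s i - s j))
        - β * D * (∑ j ∈ Nd i, (s i + s j))) :
    Mmax hn s / 2 ≤ Mmax hn s' := by
  subst hD
  set M := Mmax hn s with hM
  clear_value M
  have hmem : ∀ j : Fin n, |s j| ≤ M := by
    intro j
    rw [hM]
    unfold Mmax
    exact Finset.le_sup' (fun i => |s i|) (Finset.mem_univ j)
  have hM0 : 0 ≤ M := le_trans (abs_nonneg (s i₁)) (hmem i₁)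
  have hZ₂ : 0 < Z₂ := lt_of_le_of_lt hZ₁ hZ₁₂
  have hn2 : (2:ℕ) ≤ n := by omega
  have h4n : (0:ℝ) < 4 * n := by positivity
  have hα' : α * (4 * n) < 1 := (lt_div_iff₀ h4n).mp hα4n
  -- Bound on the attraction term
  have hNpsum : |∑ j ∈ Np i₁, (s i₁ - s j)| ≤ (n : ℝ) * (2 * M) := by
    calc |∑ j ∈ Np i₁, (s i₁ - s j)| ≤ ∑ j ∈ Np i₁, |s i₁ - s j| :=
          Finset.abs_sum_le_sum_abs _ _
      _ ≤ ∑ j ∈ Np i₁, (2 * M) := by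
          apply Finset.sum_le_sum
          intro j _
          have h1 := abs_le.mp (hmem i₁)
          have h2 := abs_le.mp (hmem j)
          rw [abs_le]; constructor <;> linarith [h1.1, h1.2, h2.1, h2.2]
      _ = ((Np i₁).card : ℝ) * (2 * M) := by rw [Finset.sum_const, nsmul_eq_mul]
      _ ≤ (n : ℝ) * (2 * M) := by
          have hc : (Np i₁).card ≤ n := by
            simpa using Finset.card_le_univ (Np i₁)
          have hc' : ((Np i₁).card : ℝ) ≤ (n : ℝ) := by exact_mod_cast hc
          nlinarith
  have hA : α * B * (∑ j ∈ Np i₁, (s i₁ - s j)) ≥ -(M / 2) := by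
    rcases hB with hB | hB
    · simp [hB]; linarith
    · subst hB
      have h1 := (abs_le.mp hNpsum).1
      have : α * ((n:ℝ) * (2 * M)) ≤ M / 2 := by nlinarith
      have h2 : α * (-(((n:ℝ)) * (2 * M))) ≤ α * (∑ j ∈ Np i₁, (s i₁ - s j)) :=
        mul_le_mul_of_nonneg_left h1 (le_of_lt hα)
      nlinarith
  -- Bound on the flipping sum
  have hjterm : ((n:ℝ) - 1) * (Z₂ * M) ≤ s i₁ + s jstar := by
    have : (1 - Z₂) * M + (-(1 - (n:ℝ) * Z₂) * M) = ((n:ℝ) - 1) * (Z₂ * M) := by ring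
    linarith
  have hrest_card : (((Nd i₁).erase jstar).card : ℝ) ≤ (n : ℝ) - 2 := by
    have h1 : ((Nd i₁).erase jstar).card = (Nd i₁).card - 1 :=
      Finset.card_erase_of_mem hjstar
    have h2 : Nd i₁ ⊆ Finset.univ.erase i₁ := by
      intro j hj
      exact Finset.mem_erase.mpr ⟨fun h => hNd i₁ (h ▸ hj), Finset.mem_univ _⟩
    have h3 : (Nd i₁).card ≤ n - 1 := by
      have := Finset.card_le_card h2
      simpa [Finset.card_erase_of_mem] using this
    have h4 : ((Nd i₁).erase jstar).card ≤ n - 2 := by omega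
    calc (((Nd i₁).erase jstar).card : ℝ) ≤ ((n - 2 : ℕ) : ℝ) := by exact_mod_cast h4
      _ = (n : ℝ) - 2 := by push_cast [Nat.cast_sub hn2]; ring
  have hrest : -(((n:ℝ) - 2) * (Z₂ * M)) ≤ ∑ j ∈ (Nd i₁).erase jstar, (s i₁ + s j) := by
    have hterm : ∀ j ∈ (Nd i₁).erase jstar, -(Z₂ * M) ≤ s i₁ + s j := by
      intro j _
      have h2 := (abs_le.mp (hmem j)).1
      nlinarith
    have h := Finset.card_nsmul_le_sum ((Nd i₁).erase jstar)
      (fun j => s i₁ + s j) (-(Z₂ * M)) hterm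
    rw [nsmul_eq_mul] at h
    have hZM : 0 ≤ Z₂ * M := by positivity
    nlinarith [hrest_card]
  have hNdsum : Z₂ * M ≤ ∑ j ∈ Nd i₁, (s i₁ + s j) := by
    have hsplit : (∑ j ∈ (Nd i₁).erase jstar, (s i₁ + s j)) + (s i₁ + s jstar)
        = ∑ j ∈ Nd i₁, (s i₁ + s j) := Finset.sum_erase_add _ _ hjstar
    nlinarith
  -- conclude
  have hbS : 2 * M ≤ β * (∑ j ∈ Nd i₁, (s i₁ + s j)) := by
    have h1 : β * (Z₂ * M) ≤ β * (∑ j ∈ Nd i₁, (s i₁ + s j)) :=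
      mul_le_mul_of_nonneg_left hNdsum (le_of_lt hβ)
    have h2 : 2 * M ≤ β * Z₂ * M := mul_le_mul_of_nonneg_right hβZ₂ hM0
    linarith [h1, h2]
  have hkick : s' i₁ ≤ -(M / 2) := by
    have h := hupd i₁
    have hZ₁M : (1 - Z₁) * M ≤ M := by nlinarith
    rw [h]; simp only [mul_one]
    linarith
  have habs : M / 2 ≤ |s' i₁| := by
    have := neg_le_abs (s' i₁)
    linarith
  have hfin : |s' i₁| ≤ Mmax hn s' := by
    unfold Mmax
    exact Finset.le_sup' (fun i => |s' i|) (Finset.mem_univ i₁)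
  linarith
end

section
/- Assume α < 1/(4n) and let 0 ≤ Z_1 < Z_2 satisfy Z_2 < 1/4. Suppose there is a node i_1 with s_{i_1}(t) ∈ [(1 − Z_2)·M(t), (1 − Z_1)·M(t)] such that s_{i_1}(t) + s_j(t) ≤ 0 for every j ∈ N_{i_1}^-(t). Then for every realization of B_t, D_t ∈ {0,1}, one step of the state-flipping update satisfies M(t+1) ≥ M(t)/4. -/
/-- suppose `α < 1/(4n)`, `0 ≤ Z₁ < Z₂ < 1/4`, and there is a node `i₁`
with `s_{i₁}(t) ∈ [(1-Z₂)M(t), (1-Z₁)M(t)]` such that `s_{i₁}(t) + s_j(t) ≤ 0` for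
every `j ∈ N_{i₁}^-(t)`. Then for every realization of `B_t, D_t ∈ {0,1}`, one step
of the state-flipping update satisfies `M(t+1) ≥ M(t)/4`. -/
theorem state_flipping_nonpositive_negative_sums_lower_bound
    {n : ℕ} (hn : 3 ≤ n)
    (α β : ℝ) (hα : 0 < α) (hβ : 0 < β)
    (hα4n : α < 1 / (4 * (n : ℝ)))
    (Np Nd : Fin n → Finset (Fin n))
    (hNp : ∀ i, i ∉ Np i) (hNd : ∀ i, i ∉ Nd i)
    (hdisj : ∀ i, Disjoint (Np i) (Nd i))
    (B D : ℝ) (hB : B = 0 ∨ B = 1) (hD : D = 0 ∨ D = 1)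
    (Z₁ Z₂ : ℝ) (hZ₁ : 0 ≤ Z₁) (hZ₁₂ : Z₁ < Z₂) (hZ₂ : Z₂ < 1 / 4)
    (s s' : Fin n → ℝ)
    (i₁ : Fin n)
    (hi₁l : (1 - Z₂) * Mmax hn s ≤ s i₁) (hi₁u : s i₁ ≤ (1 - Z₁) * Mmax hn s)
    (hneg : ∀ j ∈ Nd i₁, s i₁ + s j ≤ 0)
    (hupd : ∀ i, s' i = s i - α * B * (∑ j ∈ Np i, (s i - s j))
        - β * D * (∑ j ∈ Nd i, (s i + s j))) :
    Mmax hn s / 4 ≤ Mmax hn s' := by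
  set M := Mmax hn s with hMdef
  have hM : ∀ i, |s i| ≤ M := fun i =>
    Finset.le_sup' (fun i => |s i|) (Finset.mem_univ i)
  have hM0 : 0 ≤ M := le_trans (abs_nonneg _) (hM i₁)
  have hB0 : 0 ≤ B := by rcases hB with h | h <;> simp [h]
  have hB1 : B ≤ 1 := by rcases hB with h | h <;> simp [h]
  have hD0 : 0 ≤ D := by rcases hD with h | h <;> simp [h]
  have hαn : 0 < (n : ℝ) := by positivity
  have hα' : α * (4 * n) < 1 := by
    have := (lt_div_iff₀ (by positivity)).mp hα4n
    linarith
  -- bound the positive-neighbor sum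
  have hT1 : |∑ j ∈ Np i₁, (s i₁ - s j)| ≤ 2 * n * M := by
    calc |∑ j ∈ Np i₁, (s i₁ - s j)| ≤ ∑ j ∈ Np i₁, |s i₁ - s j| :=
          Finset.abs_sum_le_sum_abs _ _
      _ ≤ ∑ _j ∈ Np i₁, (2 * M) := by
          refine Finset.sum_le_sum fun j _ => ?_
          have h1 := hM i₁
          have h2 := hM j
          calc |s i₁ - s j| ≤ |s i₁| + |s j| := abs_sub _ _
            _ ≤ 2 * M := by linarith
      _ = (Np i₁).card * (2 * M) := by
          rw [Finset.sum_const, nsmul_eq_mul]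
      _ ≤ n * (2 * M) := by
          have hc : ((Np i₁).card : ℝ) ≤ n := by
            exact_mod_cast le_trans (Finset.card_le_univ _) (by simp)
          exact mul_le_mul_of_nonneg_right hc (by linarith)
      _ = 2 * n * M := by ring
  have hT2 : ∑ j ∈ Nd i₁, (s i₁ + s j) ≤ 0 := Finset.sum_nonpos hneg
  set T : ℝ := ∑ j ∈ Np i₁, (s i₁ - s j) with hTdef
  have hBT : B * T ≤ |T| := by
    rcases le_or_gt 0 T with h | h
    · calc B * T ≤ 1 * T := mul_le_mul_of_nonneg_right hB1 h
        _ = T := one_mul T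
        _ ≤ |T| := le_abs_self T
    · have : B * T ≤ 0 := mul_nonpos_of_nonneg_of_nonpos hB0 h.le
      exact le_trans this (abs_nonneg T)
  have h1 : α * B * T ≤ M / 2 := by
    have h2 : α * (B * T) ≤ α * |T| := mul_le_mul_of_nonneg_left hBT hα.le
    have h3 : α * |T| ≤ α * (2 * n * M) := mul_le_mul_of_nonneg_left hT1 hα.le
    have h4 : α * (2 * n * M) ≤ M / 2 := by nlinarith
    calc α * B * T = α * (B * T) := by ring
      _ ≤ M / 2 := le_trans h2 (le_trans h3 h4)
  have hβD : 0 ≤ β * D := mul_nonneg hβ.le hD0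
  have hterm2 : β * D * (∑ j ∈ Nd i₁, (s i₁ + s j)) ≤ 0 :=
    mul_nonpos_of_nonneg_of_nonpos hβD hT2
  have hsi : (3 / 4 : ℝ) * M ≤ s i₁ := by nlinarith
  have hs' : M / 4 ≤ s' i₁ := by
    rw [hupd i₁]
    rw [← hTdef]
    linarith
  have hup : |s' i₁| ≤ Mmax hn s' :=
    Finset.le_sup' (fun i => |s' i|) (Finset.mem_univ i₁)
  have := le_abs_self (s' i₁)
  linarith
end

section
/- Assume α < 1/(4n), D_t = 1, and let 0 ≤ Z_1 < Z_2 satisfy n·Z_2 < 1/4 and β·Z_2 ≥ 2. Suppose there exists a node i_1 with |s_{i_1}(t)| ∈ [(1 − Z_2)·M(t), (1 − Z_1)·M(t)]. Then, for every realization of the neighbor sets and of B_t ∈ {0,1}, at least one of the following holds after one step of the state-flipping update: (H1) M(t+1) ≥ M(t)/4, or (H2) there exists a node i_2 with |s_{i_2}(t)| ∈ [(1 − n·Z_2)·M(t), (1 − Z_2)·M(t)]. -/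
set_option maxHeartbeats 1600000 in
/-- suppose `α < 1/(4n)`, `D_t = 1`, `0 ≤ Z₁ < Z₂`, `n·Z₂ < 1/4`,
`β·Z₂ ≥ 2`, and there is a node `i₁` with `|s_{i₁}(t)| ∈ [(1-Z₂)M(t), (1-Z₁)M(t)]`.
Then either `M(t+1) ≥ M(t)/4`, or there exists a node `i₂` with
`|s_{i₂}(t)| ∈ [(1-n·Z₂)M(t), (1-Z₂)M(t)]`. -/
theorem state_flipping_claim_dichotomy
    {n : ℕ} (hn : 3 ≤ n)
    (α β : ℝ) (hα : 0 < α) (hβ : 0 < β)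
    (hα4n : α < 1 / (4 * (n : ℝ)))
    (Np Nd : Fin n → Finset (Fin n))
    (hNp : ∀ i, i ∉ Np i) (hNd : ∀ i, i ∉ Nd i)
    (hdisj : ∀ i, Disjoint (Np i) (Nd i))
    (B D : ℝ) (hB : B = 0 ∨ B = 1) (hD : D = 1)
    (Z₁ Z₂ : ℝ) (hZ₁ : 0 ≤ Z₁) (hZ₁₂ : Z₁ < Z₂)
    (hZ₂n : (n : ℝ) * Z₂ < 1 / 4) (hβZ₂ : β * Z₂ ≥ 2)
    (s s' : Fin n → ℝ)
    (i₁ : Fin n)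
    (hi₁l : (1 - Z₂) * Mmax hn s ≤ |s i₁|) (hi₁u : |s i₁| ≤ (1 - Z₁) * Mmax hn s)
    (hupd : ∀ i, s' i = s i - α * B * (∑ j ∈ Np i, (s i - s j))
        - β * D * (∑ j ∈ Nd i, (s i + s j))) :
    Mmax hn s / 4 ≤ Mmax hn s' ∨
      ∃ i₂ : Fin n, (1 - (n : ℝ) * Z₂) * Mmax hn s ≤ |s i₂| ∧
        |s i₂| ≤ (1 - Z₂) * Mmax hn s := by
  classical
  set M := Mmax hn s with hMdef
  have hMle : ∀ i, |s i| ≤ M := fun i => Finset.le_sup' (fun i => |s i|) (Finset.mem_univ i)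
  have hM0 : 0 ≤ M := le_trans (abs_nonneg _) (hMle ⟨0, by omega⟩)
  have hM'0 : 0 ≤ Mmax hn s' :=
    le_trans (abs_nonneg _) (Finset.le_sup' (fun i => |s' i|) (Finset.mem_univ ⟨0, by omega⟩))
  rcases le_or_gt M 0 with hMz | hMpos
  · left; linarith
  by_cases hH2 : ∃ i₂ : Fin n, (1 - (n : ℝ) * Z₂) * M ≤ |s i₂| ∧ |s i₂| ≤ (1 - Z₂) * M
  · exact Or.inr hH2
  left
  push_neg at hH2
  have hdich : ∀ i : Fin n, |s i| < (1 - (n : ℝ) * Z₂) * M ∨ (1 - Z₂) * M < |s i| := by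
    intro i
    rcases lt_or_ge (|s i|) ((1 - (n : ℝ) * Z₂) * M) with h | h
    · exact Or.inl h
    · exact Or.inr (hH2 i h)
  have hZ₂pos : 0 < Z₂ := lt_of_le_of_lt hZ₁ hZ₁₂
  have hn3 : (3 : ℝ) ≤ (n : ℝ) := by exact_mod_cast hn
  have hZ₂q : Z₂ < 1 / 4 := by nlinarith
  -- the set of "big" nodes and its minimal element m
  set Big := Finset.univ.filter (fun i : Fin n => (1 - Z₂) * M < |s i|) with hBigdef
  have hBigne : Big.Nonempty := by
    obtain ⟨im, -, him⟩ := Finset.exists_mem_eq_sup'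
      (⟨⟨0, by omega⟩, Finset.mem_univ _⟩ : (Finset.univ : Finset (Fin n)).Nonempty)
      (fun i : Fin n => |s i|)
    refine ⟨im, Finset.mem_filter.mpr ⟨Finset.mem_univ _, ?_⟩⟩
    have : M = |s im| := him
    nlinarith
  obtain ⟨m, hmBig, hmmin⟩ := Finset.exists_min_image Big (fun i => |s i|) hBigne
  have hmbig : (1 - Z₂) * M < |s m| := (Finset.mem_filter.mp hmBig).2
  -- the sign of s m
  set σ : ℝ := if 0 ≤ s m then 1 else -1 with hσdef
  have hσ1 : σ = 1 ∨ σ = -1 := by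
    by_cases h : 0 ≤ s m
    · left; simp [hσdef, h]
    · right; simp [hσdef, h]
  have hσm : σ * s m = |s m| := by
    by_cases h : 0 ≤ s m
    · simp [hσdef, h, abs_of_nonneg h]
    · push_neg at h
      simp [hσdef, not_le.mpr h, abs_of_neg h]
  have hσabs : ∀ x : ℝ, |σ * x| = |x| := by
    intro x
    rcases hσ1 with h | h <;> simp [h]
  have hσle : ∀ x : ℝ, σ * x ≤ |x| := fun x => (le_abs_self (σ * x)).trans (hσabs x).le
  -- the flipping term
  set T : ℝ := ∑ j ∈ Nd m, (s m + s j) with hTdef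
  set t : Fin n → ℝ := fun j => σ * (s m + s j) with htdef
  have hσT : σ * T = ∑ j ∈ Nd m, t j := by
    rw [hTdef, Finset.mul_sum]
  -- classify neighbors
  set p : Fin n → Prop := fun j => (1 - Z₂) * M < |s j| ∧ σ * s j < 0 with hpdef
  have hOppbound : ∀ j ∈ (Nd m).filter (fun j => p j), -(Z₂ * M) ≤ t j ∧ t j ≤ 0 := by
    intro j hj
    have hjNd := (Finset.mem_filter.mp hj).1
    have hp : p j := (Finset.mem_filter.mp hj).2
    simp only [hpdef] at hp
    obtain ⟨hjbig, hjneg⟩ := hp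
    have hjs : σ * s j = -|s j| := by
      have h1 : |s j| = -(σ * s j) := by rw [← hσabs (s j)]; exact abs_of_neg hjneg
      linarith
    have hjBigmem : j ∈ Big := Finset.mem_filter.mpr ⟨Finset.mem_univ _, hjbig⟩
    have hmin := hmmin j hjBigmem
    have htj : t j = |s m| - |s j| := by
      simp only [htdef]; rw [mul_add, hσm, hjs]; ring
    constructor
    · rw [htj]; have := hMle j; linarith
    · rw [htj]; linarith
  have hRstbound : ∀ j ∈ (Nd m).filter (fun j => ¬ p j),
      ((n : ℝ) - 1) * Z₂ * M ≤ t j := by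
    intro j hj
    have hjNd := (Finset.mem_filter.mp hj).1
    have hjnp : ¬ p j := (Finset.mem_filter.mp hj).2
    simp only [hpdef] at hjnp
    have htj : t j = |s m| + σ * s j := by
      simp only [htdef]; rw [mul_add, hσm]
    rcases hdich j with hsmall | hbig
    · -- small node: aligned term
      have h1 : -|s j| ≤ σ * s j := by
        have := neg_abs_le (σ * s j)
        rw [hσabs] at this; exact this
      rw [htj]; nlinarith [hMpos, hZ₂pos]
    · -- big node with σ * s j ≥ 0
      have hpos : 0 ≤ σ * s j := by
        by_contra hc
        push_neg at hc
        exact hjnp ⟨hbig, hc⟩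
      have hjs : σ * s j = |s j| := by
        have := abs_of_nonneg hpos
        rw [hσabs] at this; exact this.symm
      rw [htj, hjs]
      nlinarith [mul_lt_mul_of_pos_right hZ₂n hMpos, mul_lt_mul_of_pos_right hZ₂q hMpos,
        mul_pos hZ₂pos hMpos]
  -- key estimate: |s m - β T| ≥ 3M/4
  have hkey : 3 * M / 4 ≤ |s m - β * T| := by
    have hsplit := Finset.sum_filter_add_sum_filter_not (Nd m) p t
    by_cases hRne : ((Nd m).filter (fun j => ¬ p j)).Nonempty
    · -- some aligned neighbor: big kick away through zero
      have hRcard : 1 ≤ (((Nd m).filter (fun j => ¬ p j)).card : ℝ) := by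
        exact_mod_cast Finset.Nonempty.card_pos hRne
      have hNdcard : (Nd m).card + 1 ≤ n := by
        have hsub : Nd m ⊆ Finset.univ.erase m := by
          intro j hj
          exact Finset.mem_erase.mpr ⟨fun h => hNd m (h ▸ hj), Finset.mem_univ _⟩
        have := Finset.card_le_card hsub
        rw [Finset.card_erase_of_mem (Finset.mem_univ _), Finset.card_univ,
          Fintype.card_fin] at this
        omega
      have hcards : ((Nd m).filter (fun j => p j)).card
          + ((Nd m).filter (fun j => ¬ p j)).card = (Nd m).card :=
        Finset.card_filter_add_card_filter_not p
      have hOcard : (((Nd m).filter (fun j => p j)).card : ℝ) ≤ (n : ℝ) - 2 := by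
        have hR1 : 1 ≤ ((Nd m).filter (fun j => ¬ p j)).card :=
          Finset.Nonempty.card_pos hRne
        have : ((Nd m).filter (fun j => p j)).card + 2 ≤ n := by omega
        have := (Nat.cast_le (α := ℝ)).mpr this
        push_cast at this
        linarith
      -- lower bound for the sums
      have hSR : (((Nd m).filter (fun j => ¬ p j)).card : ℝ) * (((n : ℝ) - 1) * Z₂ * M)
          ≤ ∑ j ∈ (Nd m).filter (fun j => ¬ p j), t j := by
        have := Finset.card_nsmul_le_sum ((Nd m).filter (fun j => ¬ p j)) t
          (((n : ℝ) - 1) * Z₂ * M) hRstbound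
        rwa [nsmul_eq_mul] at this
      have hSO : (((Nd m).filter (fun j => p j)).card : ℝ) * (-(Z₂ * M))
          ≤ ∑ j ∈ (Nd m).filter (fun j => p j), t j := by
        have := Finset.card_nsmul_le_sum ((Nd m).filter (fun j => p j)) t
          (-(Z₂ * M)) (fun j hj => (hOppbound j hj).1)
        rwa [nsmul_eq_mul] at this
      have hcnonneg : 0 ≤ ((n : ℝ) - 1) * Z₂ * M := by
        rw [mul_assoc]
        exact (mul_pos (by linarith : (0:ℝ) < (n : ℝ) - 1) (mul_pos hZ₂pos hMpos)).le
      have hσTeq : σ * T = (∑ j ∈ (Nd m).filter (fun j => p j), t j)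
          + ∑ j ∈ (Nd m).filter (fun j => ¬ p j), t j := by rw [hσT, ← hsplit]
      have hσTlb : Z₂ * M ≤ σ * T := by
        set SR : ℝ := ∑ j ∈ (Nd m).filter (fun j => ¬ p j), t j with hSRdef
        set SO : ℝ := ∑ j ∈ (Nd m).filter (fun j => p j), t j with hSOdef
        set cR : ℝ := (((Nd m).filter (fun j => ¬ p j)).card : ℝ) with hcRdef
        set cO : ℝ := (((Nd m).filter (fun j => p j)).card : ℝ) with hcOdef
        have hcO0 : 0 ≤ cO := Nat.cast_nonneg _
        have hZM0 : 0 < Z₂ * M := mul_pos hZ₂pos hMpos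
        have h1 : ((n : ℝ) - 1) * Z₂ * M ≤ SR := by
          have h := mul_le_mul_of_nonneg_right hRcard hcnonneg
          rw [one_mul] at h
          linarith [hSR]
        have h2 : ((n : ℝ) - 2) * (-(Z₂ * M)) ≤ SO := by
          have h := mul_le_mul_of_nonpos_right hOcard (by linarith : -(Z₂ * M) ≤ 0)
          linarith [hSO]
        have hring : ((n : ℝ) - 1) * Z₂ * M + ((n : ℝ) - 2) * (-(Z₂ * M)) = Z₂ * M := by ring
        rw [hσTeq]
        linarith
      have hβT : 2 * M ≤ β * (σ * T) := by
        have h1 : β * (Z₂ * M) ≤ β * (σ * T) := mul_le_mul_of_nonneg_left hσTlb hβ.le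
        have h2 : 2 * M ≤ β * Z₂ * M := mul_le_mul_of_nonneg_right hβZ₂ hM0
        have h3 : β * Z₂ * M = β * (Z₂ * M) := by ring
        linarith
      have h3 : 3 * M / 4 ≤ σ * (β * T - s m) := by
        have : σ * (β * T - s m) = β * (σ * T) - |s m| := by
          rw [mul_sub, hσm]; ring
        rw [this]
        have := hMle m
        linarith
      calc 3 * M / 4 ≤ σ * (β * T - s m) := h3
        _ ≤ |β * T - s m| := hσle _
        _ = |s m - β * T| := abs_sub_comm _ _
    · -- all neighbors are big-opposite: state pushed away from zero
      rw [Finset.not_nonempty_iff_eq_empty] at hRne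
      have hσTub : σ * T ≤ 0 := by
        rw [hσT, ← hsplit, hRne, Finset.sum_empty, add_zero]
        exact Finset.sum_nonpos (fun j hj => (hOppbound j hj).2)
      have h3 : 3 * M / 4 ≤ σ * (s m - β * T) := by
        have heq : σ * (s m - β * T) = |s m| - β * (σ * T) := by
          rw [mul_sub, hσm]; ring
        rw [heq]
        have h4 : β * (σ * T) ≤ 0 := mul_nonpos_of_nonneg_of_nonpos hβ.le hσTub
        have h5 := mul_lt_mul_of_pos_right hZ₂q hMpos
        linarith
      exact h3.trans (hσle _)
  -- bound for the attraction term
  have hP : |α * B * (∑ j ∈ Np m, (s m - s j))| ≤ M / 2 := by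
    have hPsum : |∑ j ∈ Np m, (s m - s j)| ≤ 2 * (n : ℝ) * M := by
      calc |∑ j ∈ Np m, (s m - s j)| ≤ ∑ j ∈ Np m, |s m - s j| :=
            Finset.abs_sum_le_sum_abs _ _
        _ ≤ ∑ _j ∈ Np m, 2 * M := by
            refine Finset.sum_le_sum (fun j _ => ?_)
            have h1 := hMle m; have h2 := hMle j
            calc |s m - s j| ≤ |s m| + |s j| := abs_sub _ _
              _ ≤ 2 * M := by linarith
        _ = ((Np m).card : ℝ) * (2 * M) := by rw [Finset.sum_const, nsmul_eq_mul]
        _ ≤ (n : ℝ) * (2 * M) := by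
            have hc : (Np m).card ≤ n := by
              have := Finset.card_le_card (Finset.subset_univ (Np m))
              rwa [Finset.card_univ, Fintype.card_fin] at this
            have hc' : ((Np m).card : ℝ) ≤ (n : ℝ) := by exact_mod_cast hc
            nlinarith
        _ = 2 * (n : ℝ) * M := by ring
    have h4nα : α * (4 * (n : ℝ)) < 1 := by
      have hn0 : (0 : ℝ) < 4 * (n : ℝ) := by linarith
      exact (lt_div_iff₀ hn0).mp hα4n
    rcases hB with hB0 | hB1
    · rw [hB0]; simp; linarith
    · rw [hB1, mul_one, abs_mul, abs_of_nonneg hα.le]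
      nlinarith [mul_le_mul_of_nonneg_left hPsum hα.le,
        mul_le_mul_of_nonneg_right h4nα.le hM0,
        abs_nonneg (∑ j ∈ Np m, (s m - s j))]
  -- conclude
  have hs'm : s m - β * T = s' m + α * B * (∑ j ∈ Np m, (s m - s j)) := by
    rw [hupd m, hD]; ring
  have habs : |s m - β * T| ≤ |s' m| + M / 2 := by
    rw [hs'm]
    exact (abs_add_le _ _).trans (by linarith)
  have hfin : M / 4 ≤ |s' m| := by linarith
  exact hfin.trans (Finset.le_sup' (fun i => |s' i|) (Finset.mem_univ m))
end

section
/- Assume α < 1/(4n) and β > 16·n^{n+1}. Then for every realization of the disjoint neighbor sets N_i^+(t), N_i^-(t) ⊆ V \ {i} and attention values B_t, D_t ∈ {0,1}, one step of the state-flipping update satisfies M(t+1) ≥ M(t)/(2n). -/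
set_option maxHeartbeats 1000000

/-- if `α < 1/(4n)` and `β > 16·n^(n+1)`, then for every realization of
the disjoint neighbor sets and attentions `B_t, D_t ∈ {0,1}`, one step of the
state-flipping update satisfies `M(t+1) ≥ M(t)/(2n)`. -/
theorem state_flipping_absolute_decrease_lower_bound
    {n : ℕ} (hn : 3 ≤ n)
    (α β : ℝ) (hα : 0 < α) (hβ : 0 < β)
    (hα4n : α < 1 / (4 * (n : ℝ)))
    (hβn : β > 16 * (n : ℝ) ^ (n + 1))
    (Np Nd : Fin n → Finset (Fin n))
    (hNp : ∀ i, i ∉ Np i) (hNd : ∀ i, i ∉ Nd i)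
    (hdisj : ∀ i, Disjoint (Np i) (Nd i))
    (B D : ℝ) (hB : B = 0 ∨ B = 1) (hD : D = 0 ∨ D = 1)
    (s s' : Fin n → ℝ)
    (hupd : ∀ i, s' i = s i - α * B * (∑ j ∈ Np i, (s i - s j))
        - β * D * (∑ j ∈ Nd i, (s i + s j))) :
    Mmax hn s / (2 * (n : ℝ)) ≤ Mmax hn s' := by
  by_contra hcon
  push_neg at hcon
  set M := Mmax hn s with hMdef
  set M' := Mmax hn s' with hM'def
  have hn3 : (3:ℝ) ≤ n := by exact_mod_cast hn
  have hn0 : (0:ℝ) < n := by linarith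
  have h2n : (0:ℝ) < 2 * n := by linarith
  have habs : ∀ i, |s i| ≤ M := fun i =>
    (Finset.le_sup' (fun j => |s j|) (Finset.mem_univ i) :)
  have habsle : ∀ i, |s' i| ≤ M' := fun i =>
    (Finset.le_sup' (fun j => |s' j|) (Finset.mem_univ i) :)
  have hM'0 : 0 ≤ M' := le_trans (abs_nonneg _) (habsle ⟨0, by omega⟩)
  have hMpos : 0 < M := by
    have h1 : 0 < M / (2 * n) := lt_of_le_of_lt hM'0 hcon
    have h2 := mul_pos h1 h2n
    rwa [div_mul_cancel₀ _ (ne_of_gt h2n)] at h2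
  have habs' : ∀ i, |s' i| * (2 * n) < M := fun i =>
    (lt_div_iff₀ h2n).mp (lt_of_le_of_lt (habsle i) hcon)
  have hα' : α * (4 * n) < 1 := (lt_div_iff₀ (by linarith)).mp hα4n
  have hB0 : 0 ≤ B := by rcases hB with h | h <;> simp [h]
  have hB1 : B ≤ 1 := by rcases hB with h | h <;> simp [h]
  have hPb : ∀ i, |∑ j ∈ Np i, (s i - s j)| ≤ n * (2 * M) := by
    intro i
    calc |∑ j ∈ Np i, (s i - s j)| ≤ ∑ j ∈ Np i, |s i - s j| :=
          Finset.abs_sum_le_sum_abs _ _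
      _ ≤ ∑ _j ∈ Np i, (2 * M) := by
          refine Finset.sum_le_sum fun j _ => ?_
          have h1 := habs i; have h2 := habs j
          have := abs_sub_abs_le_abs_sub (s i) (s j)
          have h3 : |s i - s j| ≤ |s i| + |s j| := by
            calc |s i - s j| = |s i + -(s j)| := by ring_nf
              _ ≤ |s i| + |-(s j)| := abs_add_le _ _
              _ = |s i| + |s j| := by rw [abs_neg]
          linarith
      _ = ((Np i).card : ℝ) * (2 * M) := by rw [Finset.sum_const, nsmul_eq_mul]
      _ ≤ n * (2 * M) := by
          have hc : (Np i).card ≤ n := by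
            simpa using Finset.card_le_card (Finset.subset_univ (Np i))
          have : ((Np i).card : ℝ) ≤ n := by exact_mod_cast hc
          nlinarith
  have hαBP : ∀ i, |α * B * (∑ j ∈ Np i, (s i - s j))| ≤ α * (n * (2 * M)) := by
    intro i
    rw [abs_mul, abs_mul, abs_of_nonneg hα.le, abs_of_nonneg hB0]
    have := hPb i
    have h1 : B * |∑ j ∈ Np i, (s i - s j)| ≤ 1 * (n * (2 * M)) := by
      apply mul_le_mul hB1 this (abs_nonneg _) zero_le_one
    nlinarith
  -- the max node
  obtain ⟨i0, -, hi0⟩ := Finset.exists_mem_eq_sup'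
    (⟨(⟨0, by omega⟩ : Fin n), Finset.mem_univ _⟩ : Finset.univ.Nonempty) fun i => |s i|
  have hi0 : M = |s i0| := hi0
  rcases hD with hD0 | hD1
  · -- D = 0 : the max node barely moves
    have he : s' i0 = s i0 - α * B * (∑ j ∈ Np i0, (s i0 - s j)) := by
      rw [hupd i0, hD0]; ring
    have h1 : |s i0| - |α * B * (∑ j ∈ Np i0, (s i0 - s j))| ≤ |s' i0| := by
      rw [he]; exact abs_sub_abs_le_abs_sub _ _
    have h2 := hαBP i0
    have h3 := habs' i0
    -- |s' i0| ≥ M - 2αnM > M/2, but |s' i0|·2n < M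
    nlinarith [abs_nonneg (s' i0)]
  · -- D = 1
    have h6 : ∀ i, |s' i| * 6 ≤ M := by
      intro i
      have h1 := habs' i
      have h2 := abs_nonneg (s' i)
      nlinarith
    have hTb : ∀ i, |β * (∑ j ∈ Nd i, (s i + s j)) - s i| ≤ 2 * M / 3 := by
      intro i
      have he : β * (∑ j ∈ Nd i, (s i + s j)) - s i
          = -(α * B * (∑ j ∈ Np i, (s i - s j))) - s' i := by
        have h := hupd i; rw [hD1] at h; linarith
      rw [he]
      calc |-(α * B * (∑ j ∈ Np i, (s i - s j))) - s' i|
          ≤ |α * B * (∑ j ∈ Np i, (s i - s j))| + |s' i| := by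
            rw [show -(α * B * (∑ j ∈ Np i, (s i - s j))) - s' i
              = -((α * B * (∑ j ∈ Np i, (s i - s j))) + s' i) by ring, abs_neg]
            exact abs_add_le _ _
        _ ≤ 2 * M / 3 := by
            have h1 := hαBP i
            have h2 := h6 i
            nlinarith
    have step : ∀ (i : Fin n) (σ : ℝ), (σ = 1 ∨ σ = -1) → 12 * (M - σ * s i) ≤ M →
        ∃ j, j ∈ Nd i ∧
          4 * n * β * (M - σ * s i) + M ≤ 4 * n * β * (M + σ * s j) ∧
          β * (M + σ * s j) ≤ n * β * (M - σ * s i) + 2 * M := by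
      intro i σ hσ hδ
      have hσs : ∀ x : Fin n, σ * s x ≤ M ∧ -M ≤ σ * s x := by
        intro x
        have := abs_le.mp (habs x)
        rcases hσ with h | h <;> subst h <;> constructor <;> linarith
      have hTlb : M ≤ 4 * (σ * (β * (∑ j ∈ Nd i, (s i + s j)))) := by
        have h1 := abs_le.mp (hTb i)
        rcases hσ with h | h <;> subst h <;> linarith
      have hTub : σ * (β * (∑ j ∈ Nd i, (s i + s j))) ≤ 2 * M := by
        have h1 := abs_le.mp (hTb i)
        have h2 := (hσs i).1
        rcases hσ with h | h <;> subst h <;> linarith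
      have hne : (Nd i).Nonempty := by
        rcases Finset.eq_empty_or_nonempty (Nd i) with h | h
        · exfalso; rw [h] at hTlb; simp at hTlb; linarith
        · exact h
      have hkne : (0:ℝ) < (Nd i).card := by
        exact_mod_cast Finset.card_pos.mpr hne
      have hkn : ((Nd i).card : ℝ) ≤ n := by
        have h := Finset.card_le_card (Finset.subset_univ (Nd i))
        simp only [Finset.card_univ, Fintype.card_fin] at h
        exact_mod_cast h
      have e1 : ∑ j ∈ Nd i, (M + σ * s j)
          = ((Nd i).card : ℝ) * (M - σ * s i)
            + σ * (∑ j ∈ Nd i, (s i + s j)) := by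
        have ha : ∑ j ∈ Nd i, (M + σ * s j)
            = ((Nd i).card : ℝ) * M + σ * ∑ j ∈ Nd i, s j := by
          rw [Finset.sum_add_distrib, Finset.sum_const, nsmul_eq_mul, Finset.mul_sum]
        have hb : ∑ j ∈ Nd i, (s i + s j)
            = ((Nd i).card : ℝ) * s i + ∑ j ∈ Nd i, s j := by
          rw [Finset.sum_add_distrib, Finset.sum_const, nsmul_eq_mul]
        rw [ha, hb]; ring
      have hterm : ∀ l ∈ Nd i, 0 ≤ M + σ * s l := fun l _ => by linarith [(hσs l).2]
      have hex : ∃ j ∈ Nd i, 4 * n * β * (M - σ * s i) + M ≤ 4 * n * β * (M + σ * s j) := by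
        by_contra hno
        push_neg at hno
        have hsum : ∑ j ∈ Nd i, (4 * n * β * (M + σ * s j))
            < ∑ _j ∈ Nd i, (4 * n * β * (M - σ * s i) + M) :=
          Finset.sum_lt_sum_of_nonempty hne fun j hj => hno j hj
        rw [← Finset.mul_sum, e1, Finset.sum_const, nsmul_eq_mul] at hsum
        have hβδ : 0 ≤ M - σ * s i := by linarith [(hσs i).1]
        have hx1 := mul_le_mul_of_nonneg_left hTlb hn0.le
        have hx2 := mul_le_mul_of_nonneg_right hkn hMpos.le
        linarith [hsum, hx1, hx2]
      obtain ⟨j, hj, hjlb⟩ := hex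
      refine ⟨j, hj, hjlb, ?_⟩
      have hsingle : M + σ * s j ≤ ∑ l ∈ Nd i, (M + σ * s l) :=
        Finset.single_le_sum hterm hj
      rw [e1] at hsingle
      have hβδ : 0 ≤ M - σ * s i := by linarith [(hσs i).1]
      have hx1 := mul_le_mul_of_nonneg_left hsingle hβ.le
      have hx2 := mul_le_mul_of_nonneg_right hkn (mul_nonneg hβ.le hβδ)
      linarith [hx1, hx2, hTub]
    -- initial sign
    set σ0 : ℝ := if 0 ≤ s i0 then 1 else -1 with hσ0def
    have hσ0 : σ0 = 1 ∨ σ0 = -1 := by rw [hσ0def]; split <;> simp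
    have hσ0s : σ0 * s i0 = M := by
      rw [hσ0def]; split_ifs with h
      · rw [one_mul, hi0, abs_of_nonneg h]
      · rw [hi0, abs_of_neg (lt_of_not_ge h)]; ring
    -- the chain
    obtain ⟨q, hq0, hqS⟩ : ∃ q : ℕ → Fin n × ℝ, q 0 = (i0, σ0) ∧ ∀ m, q (m+1) =
        (if h : ((q m).2 = 1 ∨ (q m).2 = -1) ∧ 12 * (M - (q m).2 * s (q m).1) ≤ M
          then ((step (q m).1 (q m).2 h.1 h.2).choose, -(q m).2)
          else q m) :=
      ⟨fun m => Nat.rec (i0, σ0) (fun _ p =>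
        if h : (p.2 = 1 ∨ p.2 = -1) ∧ 12 * (M - p.2 * s p.1) ≤ M
        then ((step p.1 p.2 h.1 h.2).choose, -p.2) else p) m, rfl, fun _ => rfl⟩
    have fire : ∀ m (h1 : (q m).2 = 1 ∨ (q m).2 = -1)
        (h2 : 12 * (M - (q m).2 * s (q m).1) ≤ M),
        (q (m+1)).2 = -(q m).2 ∧
        4 * n * β * (M - (q m).2 * s (q m).1) + M
          ≤ 4 * n * β * (M - (q (m+1)).2 * s (q (m+1)).1) ∧
        β * (M - (q (m+1)).2 * s (q (m+1)).1)
          ≤ n * β * (M - (q m).2 * s (q m).1) + 2 * M := by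
      intro m h1 h2
      have hs : q (m+1) = ((step (q m).1 (q m).2 h1 h2).choose, -(q m).2) := by
        rw [hqS m, dif_pos ⟨h1, h2⟩]
      obtain ⟨hj, hlb, hub⟩ := (step (q m).1 (q m).2 h1 h2).choose_spec
      rw [hs]
      refine ⟨rfl, ?_, ?_⟩
      · simp only; linarith [hlb]
      · simp only; linarith [hub]
    have hsmall : ∀ x : ℝ, 0 ≤ x → β * x ≤ 2 * M * ((n:ℝ) ^ n - 1) → 12 * x ≤ M := by
      intro x hx hbx
      have hps : (n:ℝ) ^ (n + 1) = (n:ℝ) ^ n * n := pow_succ _ _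
      have hpow0 : (0:ℝ) < (n:ℝ) ^ n := by positivity
      have h1 : 16 * (n:ℝ) ^ (n + 1) * x ≤ β * x := mul_le_mul_of_nonneg_right hβn.le hx
      nlinarith [h1, hbx, hps, hpow0, hMpos, hx,
        mul_nonneg (mul_nonneg hx hpow0.le) (show (0:ℝ) ≤ (n:ℝ) - 3 by linarith)]
    have dnn : ∀ m, ((q m).2 = 1 ∨ (q m).2 = -1) → 0 ≤ M - (q m).2 * s (q m).1 := by
      intro m h
      have := abs_le.mp (habs (q m).1)
      rcases h with h | h <;> rw [h] <;> [linarith; nlinarith]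
    have main : ∀ m, m ≤ n → ((q m).2 = 1 ∨ (q m).2 = -1) ∧
        β * (M - (q m).2 * s (q m).1) ≤ 2 * M * ((n:ℝ) ^ m - 1) := by
      intro m
      induction m with
      | zero =>
        intro _
        rw [hq0]
        exact ⟨hσ0, by simp [hσ0s]⟩
      | succ m ih =>
        intro hm1
        have hm : m ≤ n := Nat.le_of_succ_le hm1
        obtain ⟨hsg, hub⟩ := ih hm
        have hmn : (n:ℝ) ^ m ≤ (n:ℝ) ^ n := by
          apply pow_le_pow_right₀ (by linarith : (1:ℝ) ≤ n) hm
        have hub2 : β * (M - (q m).2 * s (q m).1) ≤ 2 * M * ((n:ℝ) ^ n - 1) := by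
          nlinarith [hub, hmn, hMpos]
        have hcond := hsmall _ (dnn m hsg) hub2
        obtain ⟨hsg', hlb', hub'⟩ := fire m hsg hcond
        constructor
        · rw [hsg']; rcases hsg with h | h <;> simp [h]
        · have h1 := mul_le_mul_of_nonneg_left hub hn0.le
          have hps : (n:ℝ) ^ (m + 1) = (n:ℝ) ^ m * n := pow_succ _ _
          have hprod : (0:ℝ) ≤ M * ((n:ℝ) - 2) :=
            mul_nonneg hMpos.le (by linarith)
          nlinarith [hub', h1, hps, hprod]
    have mono : ∀ m, m < n → 4 * n * β * (M - (q m).2 * s (q m).1) + M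
        ≤ 4 * n * β * (M - (q (m+1)).2 * s (q (m+1)).1) := by
      intro m hm
      obtain ⟨hsg, hub⟩ := main m (le_of_lt hm)
      have hmn : (n:ℝ) ^ m ≤ (n:ℝ) ^ n := by
        apply pow_le_pow_right₀ (by linarith : (1:ℝ) ≤ n) (le_of_lt hm)
      have hub2 : β * (M - (q m).2 * s (q m).1) ≤ 2 * M * ((n:ℝ) ^ n - 1) := by
        nlinarith [hub, hmn, hMpos]
      exact (fire m hsg (hsmall _ (dnn m hsg) hub2)).2.1
    have incr : ∀ m2, m2 ≤ n → ∀ m1, m1 < m2 →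
        4 * n * β * (M - (q m1).2 * s (q m1).1) + M
          ≤ 4 * n * β * (M - (q m2).2 * s (q m2).1) := by
      intro m2
      induction m2 with
      | zero => intro _ m1 h; omega
      | succ m2 ih =>
        intro hle m1 h1
        have hm2n : m2 < n := Nat.lt_of_succ_le hle
        have hstep := mono m2 hm2n
        rcases Nat.lt_or_ge m1 m2 with h | h
        · have := ih (le_of_lt hm2n) m1 h
          linarith [hMpos]
        · have he : m1 = m2 := by omega
          subst he
          exact hstep
    -- pigeonhole
    suffices H : ∀ a b : Fin (n+1), (a:ℕ) < (b:ℕ) →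
        (q (a:ℕ)).1 = (q (b:ℕ)).1 → False by
      have hnoinj : ¬ Function.Injective (fun m : Fin (n+1) => (q (m:ℕ)).1) := by
        intro hinj
        have hc := Fintype.card_le_of_injective _ hinj
        simp [Fintype.card_fin] at hc
      obtain ⟨a, b, hfab, hab⟩ := Function.not_injective_iff.mp hnoinj
      rcases lt_or_gt_of_ne hab with h | h
      · exact H a b h hfab
      · exact H b a h hfab.symm
    intro a b hab hnode
    set m1 := (a : ℕ)
    set m2 := (b : ℕ)
    have hm2 : m2 ≤ n := by have := b.isLt; omega
    have hm1 : m1 ≤ n := by omega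
    obtain ⟨hsg1, hub1⟩ := main m1 hm1
    obtain ⟨hsg2, hub2⟩ := main m2 hm2
    have hmn1 : (n:ℝ) ^ m1 ≤ (n:ℝ) ^ n := pow_le_pow_right₀ (by linarith : (1:ℝ) ≤ n) hm1
    have hmn2 : (n:ℝ) ^ m2 ≤ (n:ℝ) ^ n := pow_le_pow_right₀ (by linarith : (1:ℝ) ≤ n) hm2
    have h12a : 12 * (M - (q m1).2 * s (q m1).1) ≤ M :=
      hsmall _ (dnn m1 hsg1) (by nlinarith [hub1, hmn1, hMpos])
    have h12b : 12 * (M - (q m2).2 * s (q m2).1) ≤ M :=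
      hsmall _ (dnn m2 hsg2) (by nlinarith [hub2, hmn2, hMpos])
    have hinc := incr m2 hm2 m1 hab
    rcases hsg1 with e1 | e1 <;> rcases hsg2 with e2 | e2 <;>
      rw [e1, hnode] at hinc h12a <;> rw [e2] at hinc h12b <;> linarith [hMpos]
end
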